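/- arXiv:2502.06096 — 2 statements merged into one kernel-verified Lean document; each statement's English description precedes it below -/
import Mathlib

section
/- Adaptive confidence set for parametric pre- and post-change classes: let C₁ := {t ∈ ℕ : t ≤ τ, M_t ≤ sup_{(θ,θ′)∈𝒮_{t−1}×𝒮′_{τ−t+1}} Quantile(1 − α r_t*; M_t, M_{t,L}¹(θ,θ′),…,M_{t,L}^B(θ,θ′))} for some α, β, γ ∈ (0,1), N, B ∈ ℕ, L ∈ ℕ ∪ {∞}, where 𝒮_{t−1} := CI(X₁,…,X_{t−1}; 1 − γ r_t*) and 𝒮′_{τ−t+1} := CS(X_t,…,X_τ; 1 − β r_t*). Then for any θ₀ ∈ Θ₀, θ₁ ∈ Θ₁, and any detection stopping time τ satisfying Assumption 1 and P_{θ₀,∞}(τ ≥ T) > 0, P_{θ₀,T,θ₁}(T ∈ C₁ | τ ≥ T) ≥ 1 − α − β − γ. -/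
open MeasureTheory ProbabilityTheory Filter Set
open scoped ENNReal NNReal

namespace SeqChange

variable {𝒳 : Type*} [MeasurableSpace 𝒳]

/-- The σ-algebra on the sequence space generated by the coordinates with indices in `s`. -/
def coordSigma (𝒳 : Type*) [MeasurableSpace 𝒳] (s : Set ℕ) : MeasurableSpace (ℕ → 𝒳) :=
  ⨆ i ∈ s, MeasurableSpace.comap (fun ω : ℕ → 𝒳 => ω i) inferInstance

/-- The natural filtration `σ(X₁, …, Xₙ)` of the observation sequence (observations are
indexed from 1; coordinate 0 is unused). -/
def natFilt (𝒳 : Type*) [MeasurableSpace 𝒳] (n : ℕ) : MeasurableSpace (ℕ → 𝒳) :=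
  coordSigma 𝒳 {i | 1 ≤ i ∧ i ≤ n}

/-- `τ` is a stopping time with respect to the natural filtration of the observation
sequence, taking values in `ℕ ∪ {∞}`. -/
def IsStoppingTimeSeq (τ : (ℕ → 𝒳) → ℕ∞) : Prop :=
  ∀ n : ℕ, MeasurableSet[natFilt 𝒳 n] {ω | τ ω ≤ (n : ℕ∞)}

/-- `P` is the joint law of a sequence of independent observations `X₁, X₂, …` with
`Xₙ ~ ν n` for every `n ≥ 1`: a probability measure whose finite-dimensional
distributions on the coordinates with indices `≥ 1` are the corresponding products. -/
def IsProductLaw (P : Measure (ℕ → 𝒳)) (ν : ℕ → Measure 𝒳) : Prop :=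
  IsProbabilityMeasure P ∧
    ∀ s : Finset ℕ, (∀ i ∈ s, 1 ≤ i) → ∀ A : ℕ → Set 𝒳, (∀ i, MeasurableSet (A i)) →
      P {ω | ∀ i ∈ s, ω i ∈ A i} = ∏ i ∈ s, ν i (A i)

/-- `P` is the law `P_{F₀,T,F₁}`: independent coordinates, `Xₙ ~ F₀` for `n < T` and
`Xₙ ~ F₁` for `n ≥ T`. -/
def IsChangeLaw (P : Measure (ℕ → 𝒳)) (F₀ F₁ : Measure 𝒳) (T : ℕ) : Prop :=
  IsProductLaw P (fun n => if n < T then F₀ else F₁)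

/-- `P` is the law `P_{F₀,∞}`: all coordinates i.i.d. `F₀` (no change ever occurs). -/
def IsNoChangeLaw (P : Measure (ℕ → 𝒳)) (F₀ : Measure 𝒳) : Prop :=
  IsProductLaw P (fun _ => F₀)

/-- Under `Q`, the coordinates with indices in `I` are i.i.d. with law `ν`. -/
def IsIIDOn (Q : Measure (ℕ → 𝒳)) (ν : Measure 𝒳) (I : Set ℕ) : Prop :=
  IsProbabilityMeasure Q ∧
    ∀ s : Finset ℕ, (↑s ⊆ I) → ∀ A : ℕ → Set 𝒳, (∀ i, MeasurableSet (A i)) →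
      Q {ω | ∀ i ∈ s, ω i ∈ A i} = ∏ i ∈ s, ν (A i)

/-- Forward filtration `σ(X_t, …, X_n)`. -/
def fwdFilt (𝒳 : Type*) [MeasurableSpace 𝒳] (t n : ℕ) : MeasurableSpace (ℕ → 𝒳) :=
  coordSigma 𝒳 {i | t ≤ i ∧ i ≤ n}

/-- Backward filtration `σ(X_n, …, X_{t-1})`. -/
def bwdFilt (𝒳 : Type*) [MeasurableSpace 𝒳] (t n : ℕ) : MeasurableSpace (ℕ → 𝒳) :=
  coordSigma 𝒳 {i | n ≤ i ∧ i < t}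

/-- A forward `t`-delay e-process under the class `𝒫₁`: a nonnegative process
`(R n)_{n ≥ t}` adapted to the forward filtration `σ(X_t, …, X_n)` such that for every
`F₁ ∈ 𝒫₁`, every law `Q` under which `X_t, X_{t+1}, …` are i.i.d. `F₁`, and every
stopping time `κ ≥ t` of the forward filtration, `E_Q[R_κ] ≤ 1`. -/
def IsForwardEProcess (𝒫₁ : Set (Measure 𝒳)) (t : ℕ) (R : ℕ → (ℕ → 𝒳) → ℝ≥0∞) : Prop :=
  (∀ n, t ≤ n → Measurable[fwdFilt 𝒳 t n] (R n)) ∧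
    ∀ F₁ ∈ 𝒫₁, ∀ Q : Measure (ℕ → 𝒳), IsIIDOn Q F₁ {i | t ≤ i} →
      ∀ κ : (ℕ → 𝒳) → ℕ, (∀ ω, t ≤ κ ω) →
        (∀ n, MeasurableSet[fwdFilt 𝒳 t n] {ω | κ ω ≤ n}) →
        ∫⁻ ω, R (κ ω) ω ∂Q ≤ 1

/-- A backward `t`-delay e-process under the class `𝒫₀`: a nonnegative process
`(S n)_{1 ≤ n < t}` adapted to the backward filtration `σ(X_n, …, X_{t-1})` such that for
every `F₀ ∈ 𝒫₀`, every law `Q` under which `X₁, …, X_{t-1}` are i.i.d. `F₀`, and every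
stopping time `κ` of the backward filtration with `1 ≤ κ < t`, `E_Q[S_κ] ≤ 1`. -/
def IsBackwardEProcess (𝒫₀ : Set (Measure 𝒳)) (t : ℕ) (S : ℕ → (ℕ → 𝒳) → ℝ≥0∞) : Prop :=
  (∀ n, 1 ≤ n → n < t → Measurable[bwdFilt 𝒳 t n] (S n)) ∧
    ∀ F₀ ∈ 𝒫₀, ∀ Q : Measure (ℕ → 𝒳), IsIIDOn Q F₀ {i | 1 ≤ i ∧ i < t} →
      ∀ κ : (ℕ → 𝒳) → ℕ, (∀ ω, 1 ≤ κ ω ∧ κ ω < t) →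
        (∀ n, MeasurableSet[bwdFilt 𝒳 t n] {ω | n ≤ κ ω}) →
        ∫⁻ ω, S (κ ω) ω ∂Q ≤ 1

/-- The localization statistic `M_t` built from the estimator `T̂`, forward e-processes `R`
and backward e-processes `S`: `M_t = R^{(t)}_{T̂ - 1}` if `t < T̂ ≤ τ < ∞`, `M_t = 1` if
`t = T̂ ≤ τ < ∞`, `M_t = S^{(t)}_{T̂}` if `T̂ < t ≤ τ < ∞`, and `M_t = -∞` if `t > τ` or
`τ = ∞`. -/
noncomputable def eStat (τ : (ℕ → 𝒳) → ℕ∞) (That : (ℕ → 𝒳) → ℕ)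
    (R S : ℕ → ℕ → (ℕ → 𝒳) → ℝ≥0∞) (t : ℕ) (ω : ℕ → 𝒳) : EReal :=
  if (t : ℕ∞) ≤ τ ω ∧ τ ω ≠ ⊤ then
    if t < That ω then ((R t (That ω - 1) ω : ℝ≥0∞) : EReal)
    else if t = That ω then 1
    else ((S t (That ω) ω : ℝ≥0∞) : EReal)
  else ⊥

/-- `Quantile(1 − c; v)`: the `⌈(1 − c)·|v|⌉`-th smallest of the values in `v`. -/
noncomputable def quantileStat (c : ℝ) (v : Multiset EReal) : EReal :=
  (v.sort (· ≤ ·)).getD (⌈(1 - c) * (v.card : ℝ)⌉₊ - 1) ⊥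

/-- Membership in the stopped confidence sequence `CS(X_t, …, X_τ; 1 − c)`:
`θ ∈ CS(X_t,…,X_n; 1−c)` whenever `τ = n` (vacuously true when `τ = ∞`). -/
def stoppedCSMem {𝒳 : Type*} [MeasurableSpace 𝒳] {Θ : Type*} (τ : (ℕ → 𝒳) → ℕ∞)
    (CSset : ℝ → ℕ → ℕ → (ℕ → 𝒳) → Set Θ) (c : ℝ) (t : ℕ) (ω : ℕ → 𝒳) (θ : Θ) : Prop :=
  ∀ n : ℕ, t ≤ n → τ ω = (n : ℕ∞) → θ ∈ CSset c t n ω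

/-- The `(B+1)`-tuple `(M_t, M_{t,∞}¹, …, M_{t,∞}^B)` viewed as functions on the product
of the data space and the simulation space. -/
def simTuple {𝒳 Ωs : Type*} (B : ℕ) (M : (ℕ → 𝒳) → EReal) (Minf : Fin B → Ωs → EReal) :
    Fin (B + 1) → ((ℕ → 𝒳) × Ωs) → EReal :=
  Fin.cases (fun q => M q.1) (fun j q => Minf j q.2)


/-! ### Auxiliary lemmas -/

section PureQuantile

lemma aux_sorted_get_iff_countP {α : Type*} [LinearOrder α] {l : List α}
    (hl : l.Pairwise (· ≤ ·))
    (p : α → Bool) (hp : ∀ a b : α, a ≤ b → p b = true → p a = true)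
    {m : ℕ} (hm : m < l.length) :
    p (l.get ⟨m, hm⟩) = true ↔ m + 1 ≤ l.countP p := by
  induction l generalizing m with
  | nil => simp at hm
  | cons a l ih =>
    have hha : ∀ b ∈ l, a ≤ b := (List.pairwise_cons.mp hl).1
    have hl' : l.Pairwise (· ≤ ·) := (List.pairwise_cons.mp hl).2
    rcases m with _ | m
    · simp only [List.get, List.countP_cons]
      constructor
      · intro h; simp only [h, if_true]; omega
      · intro h
        by_cases ha : p a = true
        · exact ha
        · rw [if_neg ha] at h
          obtain ⟨b, hb, hpb⟩ := (List.countP_pos_iff (l := l) (p := p)).mp (by omega)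
          exact hp a b (hha b hb) hpb
    · have hm' : m < l.length := by simpa using hm
      simp only [List.get, List.countP_cons]
      by_cases ha : p a = true
      · simp only [ha, if_true]
        rw [ih hl' hm']
        omega
      · constructor
        · intro h
          exact absurd (hp a _ (hha _ (List.get_mem l ⟨m, hm'⟩)) h) ha
        · intro h
          have h0 : l.countP p = 0 := List.countP_eq_zero.mpr
            (fun b hb hpb => ha (hp a b (hha b hb) hpb))
          simp [ha, h0] at h

lemma aux_sortGetD_le_iff {v : Multiset EReal} {m : ℕ} (hm : m < Multiset.card v) (t : EReal) :
    (v.sort (· ≤ ·)).getD m ⊥ ≤ t ↔ m + 1 ≤ v.countP (· ≤ t) := by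
  classical
  have hlen : (v.sort (· ≤ ·)).length = Multiset.card v := Multiset.length_sort _
  have hm' : m < (v.sort (· ≤ ·)).length := by rw [hlen]; exact hm
  rw [List.getD_eq_getElem _ _ hm']
  have hs : (v.sort (· ≤ ·)).Pairwise (· ≤ ·) := Multiset.pairwise_sort (s := v) (r := (· ≤ ·))
  have := aux_sorted_get_iff_countP hs (fun x => decide (x ≤ t))
    (fun a b hab hb => by simp only [decide_eq_true_eq] at *; exact hab.trans hb) hm'
  simp only [decide_eq_true_eq, List.get_eq_getElem] at this
  rw [this]
  have : v.countP (· ≤ t) = (v.sort (· ≤ ·)).countP (fun x => decide (x ≤ t)) := by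
    conv_lhs => rw [← Multiset.sort_eq (s := v) (r := (· ≤ ·))]
    exact Multiset.coe_countP _ _
  rw [this]

lemma aux_sortGetD_lt_iff {v : Multiset EReal} {m : ℕ} (hm : m < Multiset.card v) (t : EReal) :
    (v.sort (· ≤ ·)).getD m ⊥ < t ↔ m + 1 ≤ v.countP (· < t) := by
  classical
  have hlen : (v.sort (· ≤ ·)).length = Multiset.card v := Multiset.length_sort _
  have hm' : m < (v.sort (· ≤ ·)).length := by rw [hlen]; exact hm
  rw [List.getD_eq_getElem _ _ hm']
  have hs : (v.sort (· ≤ ·)).Pairwise (· ≤ ·) := Multiset.pairwise_sort (s := v) (r := (· ≤ ·))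
  have := aux_sorted_get_iff_countP hs (fun x => decide (x < t))
    (fun a b hab hb => by simp only [decide_eq_true_eq] at *; exact lt_of_le_of_lt hab hb) hm'
  simp only [decide_eq_true_eq, List.get_eq_getElem] at this
  rw [this]
  have : v.countP (· < t) = (v.sort (· ≤ ·)).countP (fun x => decide (x < t)) := by
    conv_lhs => rw [← Multiset.sort_eq (s := v) (r := (· ≤ ·))]
    exact Multiset.coe_countP _ _
  rw [this]

lemma quantileStat_mono {v w : Multiset EReal} (hcard : Multiset.card v = Multiset.card w)
    (h : ∀ t : EReal, w.countP (· ≤ t) ≤ v.countP (· ≤ t)) (c : ℝ) :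
    quantileStat c v ≤ quantileStat c w := by
  classical
  unfold quantileStat
  rw [hcard]
  set m := ⌈(1 - c) * (Multiset.card w : ℝ)⌉₊ - 1 with hm
  by_cases hlt : m < Multiset.card w
  · set t := (w.sort (· ≤ ·)).getD m ⊥ with ht
    have h1 : m + 1 ≤ w.countP (· ≤ t) := (aux_sortGetD_le_iff hlt t).mp le_rfl
    exact (aux_sortGetD_le_iff (hcard ▸ hlt) t).mpr (h1.trans (h t))
  · rw [List.getD_eq_default _ _ (by rw [Multiset.length_sort]; omega),
      List.getD_eq_default _ _ (by rw [Multiset.length_sort]; omega)]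

end PureQuantile

section Meas

lemma countP_map_univ {N : ℕ} (y : Fin N → EReal) (p : EReal → Prop) [DecidablePred p] :
    Multiset.countP p (Multiset.map y Finset.univ.val) =
      (Finset.univ.filter fun j => p (y j)).card := by
  rw [Multiset.countP_map, Finset.card, Finset.filter_val]

lemma card_map_univ {N : ℕ} (y : Fin N → EReal) :
    Multiset.card (Multiset.map y Finset.univ.val) = N := by simp

lemma countP_map_le {N : ℕ} {f g : Fin N → EReal} (hfg : ∀ j, f j ≤ g j) (t : EReal) :
    (Multiset.map g Finset.univ.val).countP (· ≤ t)
      ≤ (Multiset.map f Finset.univ.val).countP (· ≤ t) := by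
  classical
  rw [countP_map_univ, countP_map_univ]
  exact Finset.card_le_card (Finset.monotone_filter_right _
    (fun j _ (hj : g j ≤ t) => (hfg j).trans hj))

lemma measurable_card_filter_le {N : ℕ} (t : EReal) :
    Measurable fun y : Fin N → EReal => (Finset.univ.filter fun j => y j ≤ t).card := by
  classical
  have : (fun y : Fin N → EReal => (Finset.univ.filter fun j => y j ≤ t).card)
      = fun y => ∑ j : Fin N, if y j ≤ t then 1 else 0 := by
    funext y; rw [Finset.card_filter]
  rw [this]
  exact Finset.measurable_sum _ fun j _ =>
    Measurable.ite (measurableSet_le (measurable_pi_apply j) measurable_const)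
      measurable_const measurable_const

lemma measurable_sortGetD {N : ℕ} (m : ℕ) :
    Measurable fun y : Fin N → EReal =>
      ((Multiset.map y Finset.univ.val).sort (· ≤ ·)).getD m ⊥ := by
  classical
  by_cases hm : m < N
  · apply measurable_of_Iic
    intro t
    have hset : (fun y : Fin N → EReal =>
        ((Multiset.map y Finset.univ.val).sort (· ≤ ·)).getD m ⊥) ⁻¹' Iic t
        = {y | m + 1 ≤ (Finset.univ.filter fun j => y j ≤ t).card} := by
      ext y
      simp only [mem_preimage, mem_Iic, mem_setOf_eq]
      rw [aux_sortGetD_le_iff (by rw [card_map_univ]; exact hm) t, countP_map_univ]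
    rw [hset]
    exact measurableSet_le measurable_const (measurable_card_filter_le t)
  · have : (fun y : Fin N → EReal =>
        ((Multiset.map y Finset.univ.val).sort (· ≤ ·)).getD m ⊥) = fun _ => ⊥ := by
      funext y
      exact List.getD_eq_default _ _ (by rw [Multiset.length_sort, card_map_univ]; omega)
    rw [this]; exact measurable_const

lemma measurable_nat_comp {α β γ : Type*} [MeasurableSpace α] [MeasurableSpace β]
    [MeasurableSpace γ] {idx : α → ℕ} (hidx : Measurable idx) {g : ℕ → β → γ}
    (hg : ∀ m, Measurable (g m)) : Measurable fun q : α × β => g (idx q.1) q.2 := by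
  intro S hS
  have : (fun q : α × β => g (idx q.1) q.2) ⁻¹' S
      = ⋃ m : ℕ, ((fun q : α × β => idx q.1) ⁻¹' {m})
          ∩ ((fun q : α × β => q.2) ⁻¹' (g m ⁻¹' S)) := by
    ext q
    simp only [mem_preimage, mem_iUnion, mem_inter_iff, mem_singleton_iff]
    constructor
    · intro h; exact ⟨idx q.1, rfl, h⟩
    · rintro ⟨m, hm, h⟩; rw [← hm] at h; exact h
  rw [this]
  exact MeasurableSet.iUnion fun m =>
    ((hidx.comp measurable_fst) (measurableSet_singleton m)).inter
      (measurable_snd (hg m hS))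

lemma measurable_idx (N : ℕ) : Measurable fun c : ℝ => ⌈(1 - c) * (N : ℝ)⌉₊ - 1 := by
  have h1 : Measurable fun c : ℝ => ⌈(1 - c) * (N : ℝ)⌉₊ :=
    Measurable.nat_ceil ((measurable_const.sub measurable_id).mul_const _)
  exact (measurable_from_top (f := fun k : ℕ => k - 1)).comp h1

lemma measurable_quantile_pair {N : ℕ} :
    Measurable fun q : ℝ × (Fin N → EReal) =>
      quantileStat q.1 (Multiset.map q.2 Finset.univ.val) := by
  have : (fun q : ℝ × (Fin N → EReal) =>
      quantileStat q.1 (Multiset.map q.2 Finset.univ.val))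
      = fun q => ((Multiset.map q.2 Finset.univ.val).sort (· ≤ ·)).getD
          (⌈(1 - q.1) * (N : ℝ)⌉₊ - 1) ⊥ := by
    funext q
    unfold quantileStat
    rw [card_map_univ]
  rw [this]
  exact measurable_nat_comp (measurable_idx N) (fun m => measurable_sortGetD m)

end Meas

section Conformal

lemma map_fun_eq_pi {X : Type*} [MeasurableSpace X] (ρ : Measure X) [IsProbabilityMeasure ρ]
    {N : ℕ} (Y : Fin N → X → EReal) (hmeas : ∀ i, Measurable (Y i))
    (hind : iIndepFun Y ρ) :
    ρ.map (fun x i => Y i x) = Measure.pi (fun i => ρ.map (Y i)) := by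
  have : ∀ i, IsProbabilityMeasure (ρ.map (Y i)) :=
    fun i => Measure.isProbabilityMeasure_map (hmeas i).aemeasurable
  refine (Measure.pi_eq fun s hs => ?_).symm
  rw [Measure.map_apply (measurable_pi_lambda _ hmeas) (MeasurableSet.univ_pi hs)]
  have hpre : (fun x i => Y i x) ⁻¹' (Set.pi univ s) = ⋂ i, Y i ⁻¹' s i := by
    ext x; simp [Set.mem_pi]
  rw [hpre, hind.meas_iInter (fun i => ⟨s i, hs i, rfl⟩)]
  exact Finset.prod_congr rfl fun i _ =>
    (Measure.map_apply (hmeas i) (hs i)).symm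

lemma pi_perm_invariant {N : ℕ} (m₀ : Measure EReal) [IsProbabilityMeasure m₀]
    (e : Equiv.Perm (Fin N)) :
    (Measure.pi fun _ : Fin N => m₀).map (fun y => y ∘ e)
      = Measure.pi fun _ : Fin N => m₀ := by
  refine (Measure.pi_eq fun s hs => ?_).symm
  have hmeas : Measurable fun y : Fin N → EReal => y ∘ e :=
    measurable_pi_lambda _ (fun i => measurable_pi_apply (e i))
  rw [Measure.map_apply hmeas (MeasurableSet.univ_pi hs)]
  have hpre : (fun y : Fin N → EReal => y ∘ e) ⁻¹' (Set.pi univ s)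
      = Set.pi univ (fun j => s (e.symm j)) := by
    ext y
    simp only [mem_preimage, Set.mem_pi, mem_univ, forall_true_left, Function.comp_apply]
    constructor
    · intro h j; simpa using h (e.symm j)
    · intro h i; simpa using h (e i)
  rw [hpre, Measure.pi_pi]
  exact Equiv.prod_comp e.symm (fun i => m₀ (s i))

lemma map_comp_perm {N : ℕ} (y : Fin N → EReal) (e : Equiv.Perm (Fin N)) :
    Multiset.map (y ∘ e) Finset.univ.val = Multiset.map y Finset.univ.val := by
  have h1 : (Finset.univ : Finset (Fin N)).val.map e = (Finset.univ : Finset (Fin N)).val := by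
    have := congrArg Finset.val (Finset.map_univ_equiv e)
    simpa using this
  calc Multiset.map (y ∘ e) Finset.univ.val
      = Multiset.map y (Finset.univ.val.map e) := by rw [Multiset.map_map]
    _ = Multiset.map y Finset.univ.val := by rw [h1]

lemma count_above_bound {N : ℕ} (y : Fin N → EReal) (k : ℕ) (hk : k ≤ N) :
    (Finset.univ.filter fun i =>
      k ≤ (Finset.univ.filter fun j => y j < y i).card).card ≤ N - k := by
  classical
  set S := Finset.univ.filter fun i : Fin N =>
    k ≤ (Finset.univ.filter fun j => y j < y i).card with hS
  rcases S.eq_empty_or_nonempty with h | h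
  · rw [h]; simp
  · obtain ⟨i₀, hi₀S, hmin⟩ := S.exists_min_image y h
    set Tset := Finset.univ.filter fun j : Fin N => y j < y i₀ with hT
    have hTk : k ≤ Tset.card := (Finset.mem_filter.mp hi₀S).2
    have hdisj : ∀ j ∈ Tset, j ∉ S := by
      intro j hj hjS
      exact absurd (hmin j hjS) (not_le.mpr (Finset.mem_filter.mp hj).2)
    have hsub : Tset ⊆ Finset.univ \ S := fun j hj =>
      Finset.mem_sdiff.mpr ⟨Finset.mem_univ j, hdisj j hj⟩
    have h1 : k ≤ (Finset.univ \ S).card := hTk.trans (Finset.card_le_card hsub)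
    have h2 : (Finset.univ \ S).card = N - S.card := by
      rw [Finset.card_sdiff_of_subset (Finset.subset_univ S), Finset.card_univ, Fintype.card_fin]
    have h3 : S.card ≤ N := by
      simpa [Fintype.card_fin] using Finset.card_le_univ S
    omega

lemma measurable_card_filter_lt_pair {N : ℕ} (i : Fin N) :
    Measurable fun y : Fin N → EReal => (Finset.univ.filter fun j => y j < y i).card := by
  classical
  have : (fun y : Fin N → EReal => (Finset.univ.filter fun j => y j < y i).card)
      = fun y => ∑ j : Fin N, if y j < y i then 1 else 0 := by
    funext y; rw [Finset.card_filter]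
  rw [this]
  exact Finset.measurable_sum _ fun j _ =>
    Measurable.ite (measurableSet_lt (measurable_pi_apply j) (measurable_pi_apply i))
      measurable_const measurable_const

lemma conformal_bound {X : Type*} [MeasurableSpace X] (ρ : Measure X) [IsProbabilityMeasure ρ]
    {N : ℕ} (Y : Fin (N + 1) → X → EReal) (hmeas : ∀ i, Measurable (Y i))
    (hind : iIndepFun Y ρ)
    (hid : ∀ i, IdentDistrib (Y i) (Y 0) ρ ρ)
    {c : ℝ} (hc : 0 < c) :
    ρ {x | quantileStat c (Multiset.map (fun i => Y i x) Finset.univ.val) < Y 0 x}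
      ≤ ENNReal.ofReal c := by
  classical
  rcases le_or_gt 1 c with hc1 | hc1
  · calc ρ _ ≤ ρ univ := measure_mono (subset_univ _)
      _ = 1 := measure_univ
      _ = ENNReal.ofReal 1 := ENNReal.ofReal_one.symm
      _ ≤ ENNReal.ofReal c := ENNReal.ofReal_le_ofReal hc1
  set k := ⌈(1 - c) * ((N + 1 : ℕ) : ℝ)⌉₊ with hkdef
  have hk1 : 1 ≤ k := by
    rw [hkdef]
    refine Nat.one_le_iff_ne_zero.mpr (Nat.pos_iff_ne_zero.mp (Nat.ceil_pos.mpr ?_))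
    have : (0:ℝ) < 1 - c := by linarith
    positivity
  have hkN : k ≤ N + 1 := by
    rw [hkdef]
    refine Nat.ceil_le.mpr ?_
    have h1c : (1 : ℝ) - c ≤ 1 := by linarith
    calc (1 - c) * ((N + 1 : ℕ) : ℝ) ≤ 1 * ((N + 1 : ℕ) : ℝ) := by
          apply mul_le_mul_of_nonneg_right h1c (by positivity)
      _ = ((N + 1 : ℕ) : ℝ) := one_mul _
  have hchar : ∀ (y : Fin (N + 1) → EReal) (i : Fin (N + 1)),
      (quantileStat c (Multiset.map y Finset.univ.val) < y i
        ↔ k ≤ (Finset.univ.filter fun j => y j < y i).card) := by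
    intro y i
    unfold quantileStat
    rw [card_map_univ]
    have hidx : k - 1 < Multiset.card (Multiset.map y Finset.univ.val) := by
      rw [card_map_univ]; omega
    rw [show ⌈(1 - c) * ((N + 1 : ℕ) : ℝ)⌉₊ - 1 = k - 1 from rfl,
      aux_sortGetD_lt_iff hidx (y i), countP_map_univ]
    have : k - 1 + 1 = k := by omega
    rw [this]
  set A : Fin (N + 1) → Set (Fin (N + 1) → EReal) := fun i =>
    {y | k ≤ (Finset.univ.filter fun j => y j < y i).card} with hA
  have hAmeas : ∀ i, MeasurableSet (A i) := by
    intro i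
    have : A i = (fun y : Fin (N+1) → EReal =>
        (Finset.univ.filter fun j => y j < y i).card) ⁻¹' (Ici k) := rfl
    rw [this]
    exact (measurable_card_filter_lt_pair i) measurableSet_Ici
  have hvec : Measurable fun x => (fun i => Y i x) := measurable_pi_lambda _ hmeas
  set ν := ρ.map (fun x i => Y i x) with hν
  have hm0 : IsProbabilityMeasure (ρ.map (Y 0)) :=
    Measure.isProbabilityMeasure_map (hmeas 0).aemeasurable
  have hνpi : ν = Measure.pi fun _ : Fin (N + 1) => ρ.map (Y 0) := by
    rw [hν, map_fun_eq_pi ρ Y hmeas hind]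
    congr 1
    funext i
    exact (hid i).map_eq
  have hνA : ∀ i, ν (A i) = ν (A 0) := by
    intro i
    set e := Equiv.swap (0 : Fin (N + 1)) i with he
    have hσ : Measurable fun y : Fin (N + 1) → EReal => y ∘ e :=
      measurable_pi_lambda _ (fun j => measurable_pi_apply (e j))
    have hpre : (fun y : Fin (N + 1) → EReal => y ∘ e) ⁻¹' (A 0) = A i := by
      ext y
      simp only [mem_preimage, hA, mem_setOf_eq]
      have h1 : ∀ t : EReal, (Finset.univ.filter fun j => (y ∘ e) j < t).card
          = (Finset.univ.filter fun j => y j < t).card := by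
        intro t
        rw [← countP_map_univ (y ∘ e) (· < t), ← countP_map_univ y (· < t), map_comp_perm]
      rw [h1]
      have h2 : (y ∘ e) 0 = y i := by
        simp only [Function.comp_apply, he, Equiv.swap_apply_left]
      rw [h2]
    calc ν (A i) = ν ((fun y : Fin (N+1) → EReal => y ∘ e) ⁻¹' (A 0)) := by rw [hpre]
      _ = (ν.map fun y : Fin (N+1) → EReal => y ∘ e) (A 0) :=
          (Measure.map_apply hσ (hAmeas 0)).symm
      _ = ν (A 0) := by rw [hνpi, pi_perm_invariant]
  have hsum : ∑ i : Fin (N + 1), ν (A i) ≤ ((N + 1 - k : ℕ) : ℝ≥0∞) := by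
    have h1 : ∀ i : Fin (N + 1), ν (A i) = ∫⁻ y, (A i).indicator 1 y ∂ν :=
      fun i => (lintegral_indicator_one (hAmeas i)).symm
    calc ∑ i : Fin (N + 1), ν (A i)
        = ∑ i : Fin (N + 1), ∫⁻ y, (A i).indicator 1 y ∂ν :=
          Finset.sum_congr rfl fun i _ => h1 i
      _ = ∫⁻ y, ∑ i : Fin (N + 1), (A i).indicator 1 y ∂ν :=
          (lintegral_finset_sum _ fun i _ =>
            (measurable_one.indicator (hAmeas i))).symm
      _ ≤ ∫⁻ _, ((N + 1 - k : ℕ) : ℝ≥0∞) ∂ν := by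
          apply lintegral_mono
          intro y
          show ∑ i : Fin (N + 1), (A i).indicator 1 y ≤ ((N + 1 - k : ℕ) : ℝ≥0∞)
          have hcard : ∑ i : Fin (N + 1), (A i).indicator (1 : (Fin (N+1) → EReal) → ℝ≥0∞) y
              = ((Finset.univ.filter fun i => y ∈ A i).card : ℝ≥0∞) := by
            rw [Finset.card_filter]
            push_cast
            apply Finset.sum_congr rfl
            intro i _
            by_cases hy : y ∈ A i <;> simp [Set.indicator_apply, hy]
          rw [hcard]
          have := count_above_bound y k hkN
          exact Nat.cast_le.mpr (by convert this; exact Iff.rfl)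
      _ = ((N + 1 - k : ℕ) : ℝ≥0∞) := by
          have : IsProbabilityMeasure ν := by
            rw [hν]; exact Measure.isProbabilityMeasure_map hvec.aemeasurable
          simp
  have hconst : ∑ i : Fin (N + 1), ν (A i) = ((N + 1 : ℕ) : ℝ≥0∞) * ν (A 0) := by
    calc ∑ i : Fin (N + 1), ν (A i) = ∑ _i : Fin (N + 1), ν (A 0) :=
        Finset.sum_congr rfl fun i _ => hνA i
      _ = ((N + 1 : ℕ) : ℝ≥0∞) * ν (A 0) := by
          rw [Finset.sum_const, Finset.card_univ, Fintype.card_fin, nsmul_eq_mul]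
  have hineq : ((N + 1 - k : ℕ) : ℝ≥0∞) ≤ ((N + 1 : ℕ) : ℝ≥0∞) * ENNReal.ofReal c := by
    have hreal : ((N + 1 - k : ℕ) : ℝ) ≤ c * ((N + 1 : ℕ) : ℝ) := by
      have hceil : (1 - c) * ((N + 1 : ℕ) : ℝ) ≤ (k : ℝ) := Nat.le_ceil _
      rw [Nat.cast_sub hkN]
      push_cast at hceil ⊢
      nlinarith
    calc ((N + 1 - k : ℕ) : ℝ≥0∞) = ENNReal.ofReal ((N + 1 - k : ℕ) : ℝ) := by
          rw [ENNReal.ofReal_natCast]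
      _ ≤ ENNReal.ofReal (c * ((N + 1 : ℕ) : ℝ)) := ENNReal.ofReal_le_ofReal hreal
      _ = ENNReal.ofReal c * ENNReal.ofReal ((N + 1 : ℕ) : ℝ) :=
          ENNReal.ofReal_mul hc.le
      _ = ((N + 1 : ℕ) : ℝ≥0∞) * ENNReal.ofReal c := by
          rw [ENNReal.ofReal_natCast, mul_comm]
  have hfinal : ν (A 0) ≤ ENNReal.ofReal c := by
    have hmul : ((N + 1 : ℕ) : ℝ≥0∞) * ν (A 0)
        ≤ ((N + 1 : ℕ) : ℝ≥0∞) * ENNReal.ofReal c := by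
      rw [← hconst]; exact hsum.trans hineq
    have hne0 : ((N + 1 : ℕ) : ℝ≥0∞) ≠ 0 := by simp
    have hnetop : ((N + 1 : ℕ) : ℝ≥0∞) ≠ ⊤ := by simp
    exact (ENNReal.mul_le_mul_iff_right hne0 hnetop).mp hmul
  have hev : {x | quantileStat c (Multiset.map (fun i => Y i x) Finset.univ.val) < Y 0 x}
      = (fun x => (fun i => Y i x)) ⁻¹' (A 0) := by
    ext x
    simp only [mem_setOf_eq, mem_preimage, hA]
    exact hchar (fun i => Y i x) 0
  rw [hev, ← Measure.map_apply hvec (hAmeas 0)]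
  exact hfinal

end Conformal

section Cyl

def cylSets (𝒳 : Type*) [MeasurableSpace 𝒳] (I : Set ℕ) : Set (Set (ℕ → 𝒳)) :=
  {S | ∃ s : Finset ℕ, ↑s ⊆ I ∧ ∃ A : ℕ → Set 𝒳, (∀ i, MeasurableSet (A i)) ∧
    S = {ω | ∀ i ∈ s, ω i ∈ A i}}

lemma coordSigma_le (I : Set ℕ) :
    coordSigma 𝒳 I ≤ (inferInstance : MeasurableSpace (ℕ → 𝒳)) := by
  refine iSup_le fun i => iSup_le fun _ => ?_
  intro S hS
  obtain ⟨A, hA, rfl⟩ := MeasurableSpace.measurableSet_comap.mp hS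
  exact measurable_pi_apply i hA

lemma coordSigma_eq_generateFrom (I : Set ℕ) :
    coordSigma 𝒳 I = MeasurableSpace.generateFrom (cylSets 𝒳 I) := by
  apply le_antisymm
  · refine iSup_le fun i => iSup_le fun hi => ?_
    intro S hS
    obtain ⟨A, hA, rfl⟩ := MeasurableSpace.measurableSet_comap.mp hS
    refine MeasurableSpace.measurableSet_generateFrom
      ⟨{i}, by simpa using hi, fun _ => A, fun _ => hA, ?_⟩
    ext ω; simp
  · refine MeasurableSpace.generateFrom_le ?_
    rintro S ⟨s, hsI, A, hA, rfl⟩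
    have hset : {ω : ℕ → 𝒳 | ∀ i ∈ s, ω i ∈ A i}
        = ⋂ i ∈ s, (fun ω : ℕ → 𝒳 => ω i) ⁻¹' A i := by
      ext ω; simp
    rw [hset]
    refine MeasurableSet.biInter s.countable_toSet fun i hi => ?_
    have hle : MeasurableSpace.comap (fun ω : ℕ → 𝒳 => ω i) inferInstance ≤ coordSigma 𝒳 I :=
      le_iSup₂ (f := fun (i : ℕ) (_ : i ∈ I) =>
        MeasurableSpace.comap (fun ω : ℕ → 𝒳 => ω i) inferInstance) i (hsI hi)
    exact hle _ ⟨A i, hA i, rfl⟩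

lemma isPiSystem_cylSets (I : Set ℕ) : IsPiSystem (cylSets 𝒳 I) := by
  rintro S1 ⟨s, hsI, A, hA, rfl⟩ S2 ⟨t, htI, B, hB, rfl⟩ -
  classical
  have hsub : ↑(s ∪ t) ⊆ I := by
    intro i hi
    rcases Finset.mem_union.mp (by exact_mod_cast hi) with h | h
    exacts [hsI h, htI h]
  refine ⟨s ∪ t, hsub,
    fun i => (if i ∈ s then A i else univ) ∩ (if i ∈ t then B i else univ),
    fun i => MeasurableSet.inter (by split <;> [exact hA i; exact MeasurableSet.univ])
      (by split <;> [exact hB i; exact MeasurableSet.univ]), ?_⟩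
  ext ω
  simp only [mem_inter_iff, mem_setOf_eq, Finset.mem_union]
  constructor
  · rintro ⟨h1, h2⟩ i hi
    constructor
    · split
      · exact h1 i ‹_›
      · exact mem_univ _
    · split
      · exact h2 i ‹_›
      · exact mem_univ _
  · intro h
    constructor
    · intro i hi
      have := (h i (Or.inl hi)).1
      rwa [if_pos hi] at this
    · intro i hi
      have := (h i (Or.inr hi)).2
      rwa [if_pos hi] at this

lemma agree_on_natFilt {P₁ P₂ : Measure (ℕ → 𝒳)} [IsProbabilityMeasure P₁]
    [IsProbabilityMeasure P₂] {n : ℕ}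
    (h : ∀ s : Finset ℕ, (↑s ⊆ {i : ℕ | 1 ≤ i ∧ i ≤ n}) → ∀ A : ℕ → Set 𝒳,
      (∀ i, MeasurableSet (A i)) → P₁ {ω | ∀ i ∈ s, ω i ∈ A i} = P₂ {ω | ∀ i ∈ s, ω i ∈ A i}) :
    ∀ S : Set (ℕ → 𝒳), MeasurableSet[natFilt 𝒳 n] S → P₁ S = P₂ S := by
  have hgen : natFilt 𝒳 n
      = MeasurableSpace.generateFrom (cylSets 𝒳 {i : ℕ | 1 ≤ i ∧ i ≤ n}) :=
    coordSigma_eq_generateFrom _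
  have hle : natFilt 𝒳 n ≤ (inferInstance : MeasurableSpace (ℕ → 𝒳)) := coordSigma_le _
  intro S hS
  refine MeasurableSpace.induction_on_inter (m := natFilt 𝒳 n) (C := fun S _ => P₁ S = P₂ S)
    hgen (isPiSystem_cylSets _) (by simp) ?_ ?_ ?_ S hS
  · rintro t ⟨s, hsI, A, hA, rfl⟩
    exact h s hsI A hA
  · intro t ht hC
    have ht' : MeasurableSet t := hle t ht
    rw [measure_compl ht' (measure_ne_top _ _), measure_compl ht' (measure_ne_top _ _),
      measure_univ, measure_univ, hC]
  · intro f hdisj hf hC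
    have hf' : ∀ i, MeasurableSet (f i) := fun i => hle _ (hf i)
    rw [measure_iUnion hdisj hf', measure_iUnion hdisj hf']
    exact tsum_congr hC

lemma tau_ge_set_eq (τ : (ℕ → 𝒳) → ℕ∞) {T : ℕ} (hT : 1 ≤ T) :
    {ω : ℕ → 𝒳 | (T : ℕ∞) ≤ τ ω} = {ω : ℕ → 𝒳 | τ ω ≤ ((T - 1 : ℕ) : ℕ∞)}ᶜ := by
  ext ω
  simp only [mem_compl_iff, mem_setOf_eq, not_le]
  have h2 : ((T - 1 : ℕ) : ℕ∞) + 1 = (T : ℕ∞) := by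
    have : ((T - 1 : ℕ) : ℕ∞) + ((1 : ℕ) : ℕ∞) = (((T - 1) + 1 : ℕ) : ℕ∞) := by
      exact_mod_cast rfl
    simpa [Nat.sub_add_cancel hT] using this
  constructor
  · intro hτ
    refine lt_of_lt_of_le ?_ hτ
    exact_mod_cast Nat.sub_lt (by omega) one_pos
  · intro hτ
    have h1 : ((T - 1 : ℕ) : ℕ∞) + 1 ≤ τ ω := (ENat.add_one_le_iff (by simp)).mpr hτ
    rwa [h2] at h1

end Cyl

section ProdRearrange

variable {X₁ X₂ X₃ : Type*} [MeasurableSpace X₁] [MeasurableSpace X₂] [MeasurableSpace X₃]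

lemma map_rearrange (μ1 : Measure X₁) (μ2 : Measure X₂) (μ3 : Measure X₃)
    [IsProbabilityMeasure μ1] [IsProbabilityMeasure μ2] [IsProbabilityMeasure μ3] :
    (μ1.prod (μ2.prod μ3)).map (fun q : X₁ × X₂ × X₃ => (q.2.2, (q.1, q.2.1)))
      = μ3.prod (μ1.prod μ2) := by
  have hΦ : Measurable fun q : X₁ × X₂ × X₃ => (q.2.2, (q.1, q.2.1)) :=
    (measurable_snd.snd).prodMk (measurable_fst.prodMk measurable_snd.fst)
  refine (Measure.prod_eq (μ := μ3) (ν := μ1.prod μ2) fun t s ht hs => ?_).symm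
  rw [Measure.map_apply hΦ (ht.prod hs)]
  have hpre : (fun q : X₁ × X₂ × X₃ => (q.2.2, (q.1, q.2.1))) ⁻¹' (t ×ˢ s)
      = {q : X₁ × X₂ × X₃ | (q.1, q.2.1) ∈ s ∧ q.2.2 ∈ t} := by
    ext q; simp [and_comm]
  rw [hpre]
  have hpre_meas : MeasurableSet {q : X₁ × X₂ × X₃ | (q.1, q.2.1) ∈ s ∧ q.2.2 ∈ t} := by
    refine MeasurableSet.inter ?_ ?_
    · exact (measurable_fst.prodMk measurable_snd.fst) hs
    · exact measurable_snd.snd ht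
  rw [Measure.prod_apply hpre_meas]
  have hslice : ∀ x1 : X₁, (Prod.mk x1 ⁻¹' {q : X₁ × X₂ × X₃ | (q.1, q.2.1) ∈ s ∧ q.2.2 ∈ t})
      = {w : X₂ | (x1, w) ∈ s} ×ˢ t := by
    intro x1; ext p; simp [Set.mem_prod, and_comm]
  calc ∫⁻ x1, (μ2.prod μ3) (Prod.mk x1 ⁻¹' _) ∂μ1
      = ∫⁻ x1, μ2 {w : X₂ | (x1, w) ∈ s} * μ3 t ∂μ1 := by
        refine lintegral_congr fun x1 => ?_
        rw [hslice x1, Measure.prod_prod]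
    _ = (∫⁻ x1, μ2 {w : X₂ | (x1, w) ∈ s} ∂μ1) * μ3 t := by
        rw [lintegral_mul_const]
        exact measurable_measure_prodMk_left hs
    _ = (μ1.prod μ2) s * μ3 t := by
        rw [Measure.prod_apply hs]
        rfl
    _ = μ3 t * (μ1.prod μ2) s := mul_comm _ _

end ProdRearrange

section MoreAux

lemma cons_eq_map_cases {B : ℕ} (a : EReal) (g : Fin B → EReal) :
    a ::ₘ Multiset.map g (Finset.univ : Finset (Fin B)).val
      = Multiset.map (Fin.cases a g : Fin (B + 1) → EReal)
          (Finset.univ : Finset (Fin (B + 1))).val := by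
  have h := congrArg Finset.val (Fin.univ_succ B)
  rw [h]
  simp only [Finset.cons_val, Finset.map_val, Multiset.map_cons, Multiset.map_map]
  rfl

lemma one_sub_ofReal_eq {c : ℝ} (hc : 0 < c) (hc1 : c ≤ 1) :
    (1 : ℝ≥0∞) - ENNReal.ofReal (1 - c) = ENNReal.ofReal c := by
  rw [← ENNReal.ofReal_one, ← ENNReal.ofReal_sub 1 (by linarith)]
  norm_num

lemma iIndepFun_of_ae_eq {X : Type*} [MeasurableSpace X] {μ : Measure X}
    {ι : Type*} {f g : ι → X → EReal} (h : ∀ i, f i =ᵐ[μ] g i)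
    (hf : iIndepFun f μ) :
    iIndepFun g μ := by
  rw [iIndepFun_iff_measure_inter_preimage_eq_mul] at hf ⊢
  intro S sets hsets
  have hae : ∀ᵐ x ∂μ, ∀ i ∈ S, f i x = g i x :=
    (ae_ball_iff S.countable_toSet).mpr fun i _ => h i
  have h1 : μ (⋂ i ∈ S, g i ⁻¹' sets i) = μ (⋂ i ∈ S, f i ⁻¹' sets i) := by
    apply measure_congr
    filter_upwards [hae] with x hx
    show (x ∈ ⋂ i ∈ S, g i ⁻¹' sets i) = (x ∈ ⋂ i ∈ S, f i ⁻¹' sets i)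
    simp only [Set.mem_iInter, Set.mem_preimage, eq_iff_iff]
    exact ⟨fun hm i hi => by rw [hx i hi]; exact hm i hi,
      fun hm i hi => by rw [← hx i hi]; exact hm i hi⟩
  rw [h1, hf S hsets]
  refine Finset.prod_congr rfl fun i _ => ?_
  apply measure_congr
  filter_upwards [h i] with x hx
  show (x ∈ f i ⁻¹' sets i) = (x ∈ g i ⁻¹' sets i)
  simp only [Set.mem_preimage, eq_iff_iff]
  rw [hx]

lemma simTuple_multiset {𝒳 Ωs : Type*} (B : ℕ) (M : (ℕ → 𝒳) → EReal)
    (Minf' : Fin B → Ωs → EReal) (x : (ℕ → 𝒳) × Ωs) :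
    Multiset.map (fun i => simTuple B M Minf' i x) (Finset.univ : Finset (Fin (B + 1))).val
      = M x.1 ::ₘ Multiset.map (fun j => Minf' j x.2) (Finset.univ : Finset (Fin B)).val := by
  rw [cons_eq_map_cases]
  congr 1
  funext i
  induction i using Fin.cases with
  | zero => rfl
  | succ j => rfl

end MoreAux

/-- Adaptive confidence set for parametric pre- and post-change
classes: with
`C₁ := {t ≤ τ : M_t ≤ sup_{(θ,θ′) ∈ 𝒮_{t−1} × 𝒮′_{τ−t+1}} Quantile(1 − α r_t*; M_t, M_{t,L}¹(θ,θ′), …, M_{t,L}^B(θ,θ′))}`,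
`𝒮_{t−1} := CI(X₁,…,X_{t−1}; 1 − γ r_t*)` and `𝒮′_{τ−t+1} := CS(X_t,…,X_τ; 1 − β r_t*)`,
for any `θ₀ ∈ Θ₀`, `θ₁ ∈ Θ₁` and any detection stopping time `τ` satisfying Assumption 1
and `P_{θ₀,∞}(τ ≥ T) > 0`, `P_{θ₀,T,θ₁}(T ∈ C₁ | τ ≥ T) ≥ 1 − α − β − γ`. -/
theorem adaptive_parametric_coverage
    {𝒳 : Type*} [MeasurableSpace 𝒳] {Θ : Type*}
    (Θ₀ Θ₁ : Set Θ) (hdisj : Disjoint Θ₀ Θ₁) (F : Θ → Measure 𝒳)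
    (τ : (ℕ → 𝒳) → ℕ∞) (hτ : IsStoppingTimeSeq τ)
    -- `P t θ θ′` is the law `P_{θ,t,θ′}`
    (P : ℕ → Θ → Θ → Measure (ℕ → 𝒳))
    (hP : ∀ t : ℕ, 1 ≤ t → ∀ θ ∈ Θ₀, ∀ θ' ∈ Θ₁, IsChangeLaw (P t θ θ') (F θ) (F θ') t)
    -- Assumption 1: least favorable pre-change parameter θ₀*
    (θ₀s : Θ) (hθ₀s : θ₀s ∈ Θ₀)
    (Pinfs : Measure (ℕ → 𝒳)) (hPinfs : IsNoChangeLaw Pinfs (F θ₀s))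
    (hass1 : ∀ θ ∈ Θ₀, ∀ t : ℕ, ∀ Pinf' : Measure (ℕ → 𝒳), IsNoChangeLaw Pinf' (F θ) →
      Pinfs {ω | (t : ℕ∞) ≤ τ ω} ≤ Pinf' {ω | (t : ℕ∞) ≤ τ ω})
    -- the observed statistic, with the convention `M_t = -∞` when `t > τ` or `τ = ∞`
    (M : ℕ → (ℕ → 𝒳) → EReal) (hMmeas : ∀ t, Measurable (M t))
    (hMbot : ∀ (t : ℕ) (ω : ℕ → 𝒳), ¬ ((t : ℕ∞) ≤ τ ω ∧ τ ω ≠ ⊤) → M t ω = ⊥)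
    (B : ℕ)
    -- simulation space carrying the simulated (truncated and untruncated) statistics
    {Ωs : Type*} [MeasurableSpace Ωs] (μs : Measure Ωs) [IsProbabilityMeasure μs]
    (ML Minf : ℕ → Fin B → Θ → Θ → Ωs → EReal)
    (hMLmeas : ∀ t j θ θ', Measurable (ML t j θ θ'))
    (hLB : ∀ t j θ θ' w, Minf t j θ θ' w ≤ ML t j θ θ' w)
    -- for each fixed t and (θ, θ′) ∈ Θ₀ × Θ₁, under `P_{θ,t,θ′}` the tuple
    -- `(M_t, M_{t,∞}¹(θ,θ′), …, M_{t,∞}^B(θ,θ′))` is i.i.d.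
    (hiid : ∀ t : ℕ, 1 ≤ t → ∀ θ ∈ Θ₀, ∀ θ' ∈ Θ₁,
      iIndepFun (simTuple B (M t) (fun j => Minf t j θ θ'))
        ((P t θ θ').prod μs) ∧
      ∀ i : Fin (B + 1),
        IdentDistrib (simTuple B (M t) (fun j => Minf t j θ θ') i)
          (simTuple B (M t) (fun j => Minf t j θ θ') 0)
          ((P t θ θ').prod μs) ((P t θ θ').prod μs))
    -- the auxiliary randomization carrying the estimators `r_t*`
    {Ωr : Type*} [MeasurableSpace Ωr] (μr : Measure Ωr) [IsProbabilityMeasure μr]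
    (r : ℕ → Ωr → ℝ) (hrmeas : ∀ t, Measurable (r t))
    (hrpos : ∀ t, ∀ᵐ a ∂μr, 0 < r t a) (hrint : ∀ t, Integrable (r t) μr)
    (hrunb : ∀ t : ℕ, ∫ a, r t a ∂μr = (Pinfs {ω | (t : ℕ∞) ≤ τ ω}).toReal)
    -- the confidence interval procedure for the pre-change parameter
    (CIset : ℝ → ℕ → (ℕ → 𝒳) → Set Θ)
    (hCImeas : ∀ (t : ℕ) (θ : Θ), MeasurableSet {q : (ℕ → 𝒳) × ℝ | θ ∈ CIset q.2 t q.1})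
    (hCI : ∀ c : ℝ, c ∈ Set.Ioo (0 : ℝ) 1 → ∀ t : ℕ, 1 ≤ t → ∀ θ ∈ Θ₀, ∀ θ' ∈ Θ₁,
      ENNReal.ofReal (1 - c) ≤ (P t θ θ') {ω | θ ∈ CIset c t ω})
    -- the confidence sequence procedure for the post-change parameter
    (CSset : ℝ → ℕ → ℕ → (ℕ → 𝒳) → Set Θ)
    (hCSmeas : ∀ (t n : ℕ) (θ : Θ),
      MeasurableSet {q : (ℕ → 𝒳) × ℝ | θ ∈ CSset q.2 t n q.1})
    (hCS : ∀ c : ℝ, c ∈ Set.Ioo (0 : ℝ) 1 → ∀ t : ℕ, 1 ≤ t → ∀ θ ∈ Θ₀, ∀ θ' ∈ Θ₁,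
      ENNReal.ofReal (1 - c) ≤ (P t θ θ') {ω | ∀ n : ℕ, t ≤ n → θ' ∈ CSset c t n ω})
    (α β γ : ℝ) (hα : α ∈ Set.Ioo (0 : ℝ) 1) (hβ : β ∈ Set.Ioo (0 : ℝ) 1)
    (hγ : γ ∈ Set.Ioo (0 : ℝ) 1)
    (T : ℕ) (hT : 1 ≤ T)
    (θ₀ : Θ) (hθ₀ : θ₀ ∈ Θ₀) (θ₁ : Θ) (hθ₁ : θ₁ ∈ Θ₁)
    (Pinf₀ : Measure (ℕ → 𝒳)) (hPinf₀ : IsNoChangeLaw Pinf₀ (F θ₀))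
    (hpos : Pinf₀ {ω | (T : ℕ∞) ≤ τ ω} ≠ 0) :
    ENNReal.ofReal (1 - α - β - γ) ≤
      ProbabilityTheory.cond ((P T θ₀ θ₁).prod (μs.prod μr))
        {q : (ℕ → 𝒳) × (Ωs × Ωr) | (T : ℕ∞) ≤ τ q.1}
        {q : (ℕ → 𝒳) × (Ωs × Ωr) |
          T ∈ {t : ℕ | 1 ≤ t ∧ (t : ℕ∞) ≤ τ q.1 ∧
            M t q.1 ≤
              ⨆ θ : Θ, ⨆ (_ : θ ∈ CIset (γ * r t q.2.2) t q.1),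
              ⨆ θ' : Θ, ⨆ (_ : stoppedCSMem τ CSset (β * r t q.2.2) t q.1 θ'),
                quantileStat (α * r t q.2.2)
                  ((M t q.1) ::ₘ
                    Multiset.map (fun j => ML t j θ θ' q.2.1)
                      (Finset.univ : Finset (Fin B)).val)}}  := by
  classical
  haveI hP₀prob : IsProbabilityMeasure (P T θ₀ θ₁) := (hP T hT θ₀ hθ₀ θ₁ hθ₁).1
  have hP₀cyl := (hP T hT θ₀ hθ₀ θ₁ hθ₁).2
  haveI hPinf₀prob : IsProbabilityMeasure Pinf₀ := hPinf₀.1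
  haveI hPinfsprob : IsProbabilityMeasure Pinfs := hPinfs.1
  set ρ : Measure ((ℕ → 𝒳) × Ωs) := (P T θ₀ θ₁).prod μs with hρdef
  haveI hρprob : IsProbabilityMeasure ρ := by rw [hρdef]; infer_instance
  -- measurability of τ-events
  have hτle : ∀ n : ℕ, MeasurableSet {ω : ℕ → 𝒳 | τ ω ≤ (n : ℕ∞)} :=
    fun n => coordSigma_le _ _ (hτ n)
  have hCω : MeasurableSet {ω : ℕ → 𝒳 | (T : ℕ∞) ≤ τ ω} := by
    rw [tau_ge_set_eq τ hT]; exact (hτle (T - 1)).compl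
  have hτeq : ∀ n : ℕ, MeasurableSet {ω : ℕ → 𝒳 | τ ω = (n : ℕ∞)} := by
    intro n
    match n with
    | 0 =>
      have hzero : {ω : ℕ → 𝒳 | τ ω = ((0 : ℕ) : ℕ∞)} = {ω | τ ω ≤ ((0 : ℕ) : ℕ∞)} := by
        ext ω; simp [le_zero_iff]
      rw [hzero]; exact hτle 0
    | (n + 1) =>
      have hstep : {ω : ℕ → 𝒳 | τ ω = ((n + 1 : ℕ) : ℕ∞)}
          = {ω | τ ω ≤ ((n + 1 : ℕ) : ℕ∞)} ∩ {ω | τ ω ≤ ((n : ℕ) : ℕ∞)}ᶜ := by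
        ext ω
        simp only [mem_inter_iff, mem_compl_iff, mem_setOf_eq, not_le]
        constructor
        · intro h; rw [h]
          exact ⟨le_rfl, by exact_mod_cast Nat.lt_succ_self n⟩
        · rintro ⟨h1, h2⟩
          have h3 : ((n : ℕ∞)) + 1 ≤ τ ω := (ENat.add_one_le_iff (by simp)).mpr h2
          have hcast : ((n : ℕ∞)) + 1 = ((n + 1 : ℕ) : ℕ∞) := by exact_mod_cast rfl
          exact le_antisymm h1 (by rwa [hcast] at h3)
      rw [hstep]; exact (hτle _).inter (hτle _).compl
  -- the pre-change law agrees with the no-change law on σ(X₁, …, X_{T-1})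
  have hagree : ∀ S : Set (ℕ → 𝒳), MeasurableSet[natFilt 𝒳 (T - 1)] S
      → (P T θ₀ θ₁) S = Pinf₀ S := by
    refine agree_on_natFilt ?_
    intro s hs A hA
    rw [hP₀cyl s (fun i hi => (hs (Finset.mem_coe.mpr hi)).1) A hA,
      hPinf₀.2 s (fun i hi => (hs (Finset.mem_coe.mpr hi)).1) A hA]
    refine Finset.prod_congr rfl fun i hi => ?_
    have h2 := (hs (Finset.mem_coe.mpr hi)).2
    show (if i < T then F θ₀ else F θ₁) (A i) = F θ₀ (A i)
    rw [if_pos (by omega : i < T)]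
  have hpPinf : (P T θ₀ θ₁) {ω | (T : ℕ∞) ≤ τ ω} = Pinf₀ {ω | (T : ℕ∞) ≤ τ ω} := by
    apply hagree
    rw [tau_ge_set_eq τ hT]
    exact MeasurableSet.compl (hτ (T - 1))
  have hp0' : (P T θ₀ θ₁) {ω | (T : ℕ∞) ≤ τ ω} ≠ 0 := by rw [hpPinf]; exact hpos
  have hPinfsle' : Pinfs {ω | (T : ℕ∞) ≤ τ ω} ≤ (P T θ₀ θ₁) {ω | (T : ℕ∞) ≤ τ ω} := by
    rw [hpPinf]; exact hass1 θ₀ hθ₀ T Pinf₀ hPinf₀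
  set p : ℝ≥0∞ := (P T θ₀ θ₁) {ω | (T : ℕ∞) ≤ τ ω} with hpdef
  have hp0 : p ≠ 0 := hp0'
  have hptop : p ≠ ⊤ := measure_ne_top _ _
  have hPinfsle : Pinfs {ω | (T : ℕ∞) ≤ τ ω} ≤ p := hPinfsle'
  -- the randomization integral identity
  have hint : ∀ c0 : ℝ, 0 ≤ c0 →
      ∫⁻ a, ENNReal.ofReal (c0 * r T a) ∂μr
        = ENNReal.ofReal c0 * Pinfs {ω | (T : ℕ∞) ≤ τ ω} := by
    intro c0 hc0
    rw [← ofReal_integral_eq_lintegral_ofReal ((hrint T).const_mul c0)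
      (by filter_upwards [hrpos T] with a ha; positivity)]
    rw [MeasureTheory.integral_const_mul, hrunb T, ENNReal.ofReal_mul hc0,
      ENNReal.ofReal_toReal (measure_ne_top _ _)]
  -- product rearrangement
  have hΦ : Measurable fun q : (ℕ → 𝒳) × (Ωs × Ωr) => (q.2.2, (q.1, q.2.1)) :=
    (measurable_snd.snd).prodMk (measurable_fst.prodMk measurable_snd.fst)
  have hQpre : ∀ E : Set (Ωr × ((ℕ → 𝒳) × Ωs)), MeasurableSet E →
      ((P T θ₀ θ₁).prod (μs.prod μr))
        ((fun q : (ℕ → 𝒳) × (Ωs × Ωr) => (q.2.2, (q.1, q.2.1))) ⁻¹' E)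
        = (μr.prod ρ) E := by
    intro E hE
    rw [← map_rearrange (P T θ₀ θ₁) μs μr, Measure.map_apply hΦ hE]
  have hρfst : ∀ s : Set (ℕ → 𝒳), ρ {x : (ℕ → 𝒳) × Ωs | x.1 ∈ s} = (P T θ₀ θ₁) s := by
    intro s
    have hx : {x : (ℕ → 𝒳) × Ωs | x.1 ∈ s} = s ×ˢ univ := by ext x; simp
    rw [hρdef, hx, Measure.prod_prod, measure_univ, mul_one]
  -- the simulated tuple: measurable modifications
  set W : Fin (B + 1) → ((ℕ → 𝒳) × Ωs) → EReal
    := simTuple B (M T) (fun j => Minf T j θ₀ θ₁) with hWdef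
  obtain ⟨hWind, hWid⟩ := hiid T hT θ₀ hθ₀ θ₁ hθ₁
  have hae : ∀ i, AEMeasurable (W i) ρ := fun i => (hWid i).aemeasurable_fst
  set Z : Fin (B + 1) → ((ℕ → 𝒳) × Ωs) → EReal := fun i => (hae i).mk (W i) with hZdef
  have hZmeas : ∀ i, Measurable (Z i) := fun i => (hae i).measurable_mk
  have hWZ : ∀ i, W i =ᵐ[ρ] Z i := fun i => (hae i).ae_eq_mk
  set Nbad : Set ((ℕ → 𝒳) × Ωs)
    := toMeasurable ρ (⋃ i, {x | W i x ≠ Z i x}) with hNdef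
  have hNmeas : MeasurableSet Nbad := measurableSet_toMeasurable _ _
  have hNnull : ρ Nbad = 0 := by
    rw [hNdef, measure_toMeasurable]
    exact measure_iUnion_null fun i => (hWZ i)
  have hZind : iIndepFun Z ρ := iIndepFun_of_ae_eq hWZ hWind
  have hZid : ∀ i, IdentDistrib (Z i) (Z 0) ρ ρ := by
    intro i
    refine ⟨(hZmeas i).aemeasurable, (hZmeas 0).aemeasurable, ?_⟩
    calc ρ.map (Z i) = ρ.map (W i) := (Measure.map_congr (hWZ i)).symm
      _ = ρ.map (W 0) := (hWid i).map_eq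
      _ = ρ.map (Z 0) := Measure.map_congr (hWZ 0)
  have hconf : ∀ c : ℝ, 0 < c →
      ρ {x | quantileStat c (Multiset.map (fun i => Z i x) Finset.univ.val) < Z 0 x}
        ≤ ENNReal.ofReal c := fun c hc => conformal_bound ρ Z hZmeas hZind hZid hc
  -- the three bad events
  set GcE : Set (Ωr × ((ℕ → 𝒳) × Ωs))
    := {z | θ₀ ∉ CIset (γ * r T z.1) T z.2.1} with hGcEdef
  set HcE : Set (Ωr × ((ℕ → 𝒳) × Ωs))
    := {z | ¬ stoppedCSMem τ CSset (β * r T z.1) T z.2.1 θ₁} with hHcEdef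
  set KE1 : Set (Ωr × ((ℕ → 𝒳) × Ωs))
    := {z | quantileStat (α * r T z.1) (Multiset.map (fun i => Z i z.2) Finset.univ.val)
        < Z 0 z.2} with hKE1def
  set KcE : Set (Ωr × ((ℕ → 𝒳) × Ωs)) := KE1 ∪ (univ ×ˢ Nbad) with hKcEdef
  -- measurability of the bad events
  have hrfst : Measurable fun z : Ωr × ((ℕ → 𝒳) × Ωs) => r T z.1 :=
    (hrmeas T).comp measurable_fst
  have hGcEmeas : MeasurableSet GcE := by
    have h1 : Measurable fun z : Ωr × ((ℕ → 𝒳) × Ωs) => (z.2.1, γ * r T z.1) :=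
      (measurable_snd.fst).prodMk (hrfst.const_mul γ)
    exact (h1 (hCImeas T θ₀)).compl
  have hHcEmeas : MeasurableSet HcE := by
    have hmem : MeasurableSet {z : Ωr × ((ℕ → 𝒳) × Ωs)
        | stoppedCSMem τ CSset (β * r T z.1) T z.2.1 θ₁} := by
      have hre : {z : Ωr × ((ℕ → 𝒳) × Ωs) | stoppedCSMem τ CSset (β * r T z.1) T z.2.1 θ₁}
          = ⋂ n : ℕ, {z : Ωr × ((ℕ → 𝒳) × Ωs)
              | T ≤ n → τ z.2.1 = (n : ℕ∞) → θ₁ ∈ CSset (β * r T z.1) T n z.2.1} := by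
        ext z
        simp only [mem_iInter, mem_setOf_eq]
        rfl
      rw [hre]
      refine MeasurableSet.iInter fun n => ?_
      by_cases hTn : T ≤ n
      · have heq : {z : Ωr × ((ℕ → 𝒳) × Ωs)
            | T ≤ n → τ z.2.1 = (n : ℕ∞) → θ₁ ∈ CSset (β * r T z.1) T n z.2.1}
            = {z : Ωr × ((ℕ → 𝒳) × Ωs) | τ z.2.1 = (n : ℕ∞)}ᶜ
              ∪ {z | θ₁ ∈ CSset (β * r T z.1) T n z.2.1} := by
          ext z
          simp only [mem_union, mem_compl_iff, mem_setOf_eq]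
          constructor
          · intro h
            by_cases hτz : τ z.2.1 = (n : ℕ∞)
            · exact Or.inr (h hTn hτz)
            · exact Or.inl hτz
          · rintro (h | h) _ hτz
            · exact absurd hτz h
            · exact h
        rw [heq]
        refine MeasurableSet.union ?_ ?_
        · exact ((measurable_snd.fst) (hτeq n)).compl
        · have h1 : Measurable fun z : Ωr × ((ℕ → 𝒳) × Ωs) => (z.2.1, β * r T z.1) :=
            (measurable_snd.fst).prodMk (hrfst.const_mul β)
          exact h1 (hCSmeas T n θ₁)
      · have heq : {z : Ωr × ((ℕ → 𝒳) × Ωs)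
            | T ≤ n → τ z.2.1 = (n : ℕ∞) → θ₁ ∈ CSset (β * r T z.1) T n z.2.1} = univ := by
          ext z; simp only [mem_setOf_eq, mem_univ, iff_true]
          intro h; exact absurd h hTn
        rw [heq]; exact MeasurableSet.univ
    exact hmem.compl
  have hKE1meas : MeasurableSet KE1 := by
    have hq1 : Measurable fun z : Ωr × ((ℕ → 𝒳) × Ωs) =>
        quantileStat (α * r T z.1) (Multiset.map (fun i => Z i z.2) Finset.univ.val) := by
      have hmap2 : Measurable fun z : Ωr × ((ℕ → 𝒳) × Ωs) =>
          ((α * r T z.1, fun i => Z i z.2) : ℝ × (Fin (B + 1) → EReal)) :=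
        (hrfst.const_mul α).prodMk
          (measurable_pi_lambda _ fun i => (hZmeas i).comp measurable_snd)
      exact (measurable_quantile_pair (N := B + 1)).comp hmap2
    exact measurableSet_lt hq1 ((hZmeas 0).comp measurable_snd)
  have hKcEmeas : MeasurableSet KcE := hKE1meas.union (MeasurableSet.univ.prod hNmeas)
  -- bounds on the three bad events
  have hGbound : (μr.prod ρ) GcE ≤ ENNReal.ofReal γ * p := by
    rw [Measure.prod_apply hGcEmeas]
    calc ∫⁻ a, ρ (Prod.mk a ⁻¹' GcE) ∂μr
        ≤ ∫⁻ a, ENNReal.ofReal (γ * r T a) ∂μr := by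
          refine lintegral_mono_ae ?_
          filter_upwards [hrpos T] with a ha
          have hsl : Prod.mk a ⁻¹' GcE
              = {x : (ℕ → 𝒳) × Ωs | x.1 ∈ {ω | θ₀ ∉ CIset (γ * r T a) T ω}} := rfl
          rw [hsl, hρfst]
          set c := γ * r T a with hcdef
          have hc : 0 < c := mul_pos hγ.1 ha
          rcases lt_or_ge c 1 with hc1 | hc1
          · have hsucc : MeasurableSet {ω | θ₀ ∈ CIset c T ω} := by
              have h1 : Measurable fun ω : ℕ → 𝒳 => (ω, c) :=
                measurable_id.prodMk measurable_const
              exact h1 (hCImeas T θ₀)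
            have hciB := hCI c ⟨hc, hc1⟩ T hT θ₀ hθ₀ θ₁ hθ₁
            have hcompl : {ω | θ₀ ∉ CIset c T ω} = {ω | θ₀ ∈ CIset c T ω}ᶜ := rfl
            rw [hcompl, measure_compl hsucc (measure_ne_top _ _), measure_univ]
            calc (1 : ℝ≥0∞) - (P T θ₀ θ₁) {ω | θ₀ ∈ CIset c T ω}
                ≤ 1 - ENNReal.ofReal (1 - c) := tsub_le_tsub_left hciB 1
              _ = ENNReal.ofReal c := one_sub_ofReal_eq hc hc1.le
          · calc (P T θ₀ θ₁) {ω | θ₀ ∉ CIset c T ω} ≤ 1 := prob_le_one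
              _ = ENNReal.ofReal 1 := ENNReal.ofReal_one.symm
              _ ≤ ENNReal.ofReal c := ENNReal.ofReal_le_ofReal hc1
      _ = ENNReal.ofReal γ * Pinfs {ω | (T : ℕ∞) ≤ τ ω} := hint γ hγ.1.le
      _ ≤ ENNReal.ofReal γ * p := mul_le_mul_right hPinfsle _
  have hHbound : (μr.prod ρ) HcE ≤ ENNReal.ofReal β * p := by
    rw [Measure.prod_apply hHcEmeas]
    calc ∫⁻ a, ρ (Prod.mk a ⁻¹' HcE) ∂μr
        ≤ ∫⁻ a, ENNReal.ofReal (β * r T a) ∂μr := by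
          refine lintegral_mono_ae ?_
          filter_upwards [hrpos T] with a ha
          have hsl : Prod.mk a ⁻¹' HcE
              = {x : (ℕ → 𝒳) × Ωs
                  | x.1 ∈ {ω | ¬ stoppedCSMem τ CSset (β * r T a) T ω θ₁}} := rfl
          rw [hsl, hρfst]
          set c := β * r T a with hcdef
          have hc : 0 < c := mul_pos hβ.1 ha
          rcases lt_or_ge c 1 with hc1 | hc1
          · have hallmeas : MeasurableSet {ω : ℕ → 𝒳 | ∀ n : ℕ, T ≤ n → θ₁ ∈ CSset c T n ω} := by
              have hre : {ω : ℕ → 𝒳 | ∀ n : ℕ, T ≤ n → θ₁ ∈ CSset c T n ω}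
                  = ⋂ n : ℕ, {ω : ℕ → 𝒳 | T ≤ n → θ₁ ∈ CSset c T n ω} := by
                ext ω; simp only [mem_iInter, mem_setOf_eq]
              rw [hre]
              refine MeasurableSet.iInter fun n => ?_
              by_cases hTn : T ≤ n
              · have heq : {ω : ℕ → 𝒳 | T ≤ n → θ₁ ∈ CSset c T n ω}
                    = {ω : ℕ → 𝒳 | θ₁ ∈ CSset c T n ω} := by
                  ext ω; simp [hTn]
                rw [heq]
                have h1 : Measurable fun ω : ℕ → 𝒳 => (ω, c) :=
                  measurable_id.prodMk measurable_const
                exact h1 (hCSmeas T n θ₁)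
              · have heq : {ω : ℕ → 𝒳 | T ≤ n → θ₁ ∈ CSset c T n ω} = univ := by
                  ext ω; simp only [mem_setOf_eq, mem_univ, iff_true]
                  intro h; exact absurd h hTn
                rw [heq]; exact MeasurableSet.univ
            have hsubs : {ω : ℕ → 𝒳 | ∀ n : ℕ, T ≤ n → θ₁ ∈ CSset c T n ω}
                ⊆ {ω | stoppedCSMem τ CSset c T ω θ₁} :=
              fun ω hω n hn _ => hω n hn
            have hmono : (P T θ₀ θ₁) {ω | ¬ stoppedCSMem τ CSset c T ω θ₁}
                ≤ (P T θ₀ θ₁) {ω : ℕ → 𝒳 | ∀ n : ℕ, T ≤ n → θ₁ ∈ CSset c T n ω}ᶜ :=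
              measure_mono (compl_subset_compl.mpr hsubs)
            have hcsB := hCS c ⟨hc, hc1⟩ T hT θ₀ hθ₀ θ₁ hθ₁
            calc (P T θ₀ θ₁) {ω | ¬ stoppedCSMem τ CSset c T ω θ₁}
                ≤ (P T θ₀ θ₁) {ω : ℕ → 𝒳 | ∀ n : ℕ, T ≤ n → θ₁ ∈ CSset c T n ω}ᶜ := hmono
              _ = 1 - (P T θ₀ θ₁) {ω : ℕ → 𝒳 | ∀ n : ℕ, T ≤ n → θ₁ ∈ CSset c T n ω} := by
                  rw [measure_compl hallmeas (measure_ne_top _ _), measure_univ]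
              _ ≤ 1 - ENNReal.ofReal (1 - c) := tsub_le_tsub_left hcsB 1
              _ = ENNReal.ofReal c := one_sub_ofReal_eq hc hc1.le
          · calc (P T θ₀ θ₁) {ω | ¬ stoppedCSMem τ CSset c T ω θ₁} ≤ 1 := prob_le_one
              _ = ENNReal.ofReal 1 := ENNReal.ofReal_one.symm
              _ ≤ ENNReal.ofReal c := ENNReal.ofReal_le_ofReal hc1
      _ = ENNReal.ofReal β * Pinfs {ω | (T : ℕ∞) ≤ τ ω} := hint β hβ.1.le
      _ ≤ ENNReal.ofReal β * p := mul_le_mul_right hPinfsle _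
  have hKbound : (μr.prod ρ) KcE ≤ ENNReal.ofReal α * p := by
    rw [hKcEdef]
    refine le_trans (measure_union_le _ _) ?_
    have h2 : (μr.prod ρ) (univ ×ˢ Nbad) = 0 := by
      rw [Measure.prod_prod, hNnull, mul_zero]
    rw [h2, add_zero, Measure.prod_apply hKE1meas]
    calc ∫⁻ a, ρ (Prod.mk a ⁻¹' KE1) ∂μr
        ≤ ∫⁻ a, ENNReal.ofReal (α * r T a) ∂μr := by
          refine lintegral_mono_ae ?_
          filter_upwards [hrpos T] with a ha
          have hsl : Prod.mk a ⁻¹' KE1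
              = {x : (ℕ → 𝒳) × Ωs
                  | quantileStat (α * r T a)
                      (Multiset.map (fun i => Z i x) Finset.univ.val) < Z 0 x} := rfl
          rw [hsl]
          exact hconf _ (mul_pos hα.1 ha)
      _ = ENNReal.ofReal α * Pinfs {ω | (T : ℕ∞) ≤ τ ω} := hint α hα.1.le
      _ ≤ ENNReal.ofReal α * p := mul_le_mul_right hPinfsle _
  -- the inclusion of the conditional failure event in the bad events
  set Aset : Set ((ℕ → 𝒳) × (Ωs × Ωr)) := {q : (ℕ → 𝒳) × (Ωs × Ωr) |
    T ∈ {t : ℕ | 1 ≤ t ∧ (t : ℕ∞) ≤ τ q.1 ∧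
      M t q.1 ≤
        ⨆ θ : Θ, ⨆ (_ : θ ∈ CIset (γ * r t q.2.2) t q.1),
        ⨆ θ' : Θ, ⨆ (_ : stoppedCSMem τ CSset (β * r t q.2.2) t q.1 θ'),
          quantileStat (α * r t q.2.2)
            ((M t q.1) ::ₘ
              Multiset.map (fun j => ML t j θ θ' q.2.1)
                (Finset.univ : Finset (Fin B)).val)}} with hAsetdef
  set Cset : Set ((ℕ → 𝒳) × (Ωs × Ωr)) := {q : (ℕ → 𝒳) × (Ωs × Ωr) | (T : ℕ∞) ≤ τ q.1}
    with hCsetdef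
  have hCsetmeas : MeasurableSet Cset := measurable_fst hCω
  have hincl : Cset ∩ Asetᶜ ⊆
      (fun q : (ℕ → 𝒳) × (Ωs × Ωr) => (q.2.2, (q.1, q.2.1))) ⁻¹' (GcE ∪ HcE ∪ KcE) := by
    rintro q ⟨hqC, hqA⟩
    by_contra hnot
    simp only [mem_preimage, mem_union, not_or] at hnot
    obtain ⟨⟨hG', hH'⟩, hK'⟩ := hnot
    have hGmem : θ₀ ∈ CIset (γ * r T q.2.2) T q.1 := not_not.mp hG'
    have hHmem : stoppedCSMem τ CSset (β * r T q.2.2) T q.1 θ₁ := not_not.mp hH'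
    rw [hKcEdef] at hK'
    simp only [mem_union, not_or, mem_prod, mem_univ, true_and] at hK'
    obtain ⟨hK1, hKN⟩ := hK'
    set x : (ℕ → 𝒳) × Ωs := (q.1, q.2.1) with hxdef
    have hxN : ∀ i, W i x = Z i x := by
      intro i
      by_contra hne
      exact hKN (subset_toMeasurable ρ _ (mem_iUnion.mpr ⟨i, hne⟩))
    have hKq : ¬ (quantileStat (α * r T q.2.2)
        (Multiset.map (fun i => Z i x) Finset.univ.val) < Z 0 x) := hK1
    have hmapWZ : Multiset.map (fun i => W i x) Finset.univ.val
        = Multiset.map (fun i => Z i x) Finset.univ.val := by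
      congr 1; funext i; exact hxN i
    have hW0 : W 0 x = M T q.1 := rfl
    have hMle : M T q.1 ≤ quantileStat (α * r T q.2.2)
        (M T q.1 ::ₘ Multiset.map (fun j => Minf T j θ₀ θ₁ q.2.1)
          (Finset.univ : Finset (Fin B)).val) := by
      have h1 : M T q.1 ≤ quantileStat (α * r T q.2.2)
          (Multiset.map (fun i => W i x) Finset.univ.val) := by
        rw [hmapWZ, ← hW0, hxN 0]
        exact not_lt.mp hKq
      have h2 : Multiset.map (fun i => W i x) Finset.univ.val
          = M T q.1 ::ₘ Multiset.map (fun j => Minf T j θ₀ θ₁ q.2.1)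
            (Finset.univ : Finset (Fin B)).val := by
        rw [hWdef]
        exact simTuple_multiset B (M T) (fun j => Minf T j θ₀ θ₁) x
      rw [← h2]; exact h1
    have hMLe : quantileStat (α * r T q.2.2)
        (M T q.1 ::ₘ Multiset.map (fun j => Minf T j θ₀ θ₁ q.2.1)
          (Finset.univ : Finset (Fin B)).val)
        ≤ quantileStat (α * r T q.2.2)
        (M T q.1 ::ₘ Multiset.map (fun j => ML T j θ₀ θ₁ q.2.1)
          (Finset.univ : Finset (Fin B)).val) := by
      apply quantileStat_mono
      · simp
      · intro t
        rw [Multiset.countP_cons, Multiset.countP_cons]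
        exact add_le_add_left (countP_map_le (fun j => hLB T j θ₀ θ₁ q.2.1) t) _
    apply hqA
    show T ∈ {t : ℕ | 1 ≤ t ∧ (t : ℕ∞) ≤ τ q.1 ∧ _}
    refine ⟨hT, hqC, ?_⟩
    refine le_trans (hMle.trans hMLe) ?_
    refine le_iSup_of_le θ₀ ?_
    refine le_iSup_of_le hGmem ?_
    refine le_iSup_of_le θ₁ ?_
    exact le_iSup_of_le hHmem le_rfl
  -- total bound on the failure probability
  have hbad : ((P T θ₀ θ₁).prod (μs.prod μr)) (Cset ∩ Asetᶜ)
      ≤ (ENNReal.ofReal α + ENNReal.ofReal β + ENNReal.ofReal γ) * p := by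
    calc ((P T θ₀ θ₁).prod (μs.prod μr)) (Cset ∩ Asetᶜ)
        ≤ ((P T θ₀ θ₁).prod (μs.prod μr))
            ((fun q : (ℕ → 𝒳) × (Ωs × Ωr) => (q.2.2, (q.1, q.2.1))) ⁻¹' (GcE ∪ HcE ∪ KcE)) :=
          measure_mono hincl
      _ = (μr.prod ρ) (GcE ∪ HcE ∪ KcE) :=
          hQpre _ ((hGcEmeas.union hHcEmeas).union hKcEmeas)
      _ ≤ (μr.prod ρ) (GcE ∪ HcE) + (μr.prod ρ) KcE := measure_union_le _ _
      _ ≤ ((μr.prod ρ) GcE + (μr.prod ρ) HcE) + (μr.prod ρ) KcE :=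
          add_le_add_left (measure_union_le _ _) _
      _ ≤ (ENNReal.ofReal γ * p + ENNReal.ofReal β * p) + ENNReal.ofReal α * p :=
          add_le_add (add_le_add hGbound hHbound) hKbound
      _ = (ENNReal.ofReal α + ENNReal.ofReal β + ENNReal.ofReal γ) * p := by ring
  -- measure of the conditioning event
  have hQC : ((P T θ₀ θ₁).prod (μs.prod μr)) Cset = p := by
    have hx : Cset = {ω : ℕ → 𝒳 | (T : ℕ∞) ≤ τ ω} ×ˢ (univ : Set (Ωs × Ωr)) := by
      ext q; simp [hCsetdef]
    rw [hx, Measure.prod_prod, measure_univ, mul_one, hpdef]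
  -- lower bound on the conditional success probability
  have hCA : p - (ENNReal.ofReal α + ENNReal.ofReal β + ENNReal.ofReal γ) * p
      ≤ ((P T θ₀ θ₁).prod (μs.prod μr)) (Cset ∩ Aset) := by
    have h1 : ((P T θ₀ θ₁).prod (μs.prod μr)) Cset
        ≤ ((P T θ₀ θ₁).prod (μs.prod μr)) (Cset ∩ Aset)
          + ((P T θ₀ θ₁).prod (μs.prod μr)) (Cset ∩ Asetᶜ) := by
      refine le_trans (measure_mono ?_) (measure_union_le _ _)
      intro q hq
      by_cases h : q ∈ Aset
      · exact Or.inl ⟨hq, h⟩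
      · exact Or.inr ⟨hq, h⟩
    rw [hQC] at h1
    exact tsub_le_iff_right.mpr (h1.trans (add_le_add_right hbad _))
  -- conclusion
  show ENNReal.ofReal (1 - α - β - γ)
    ≤ ProbabilityTheory.cond ((P T θ₀ θ₁).prod (μs.prod μr)) Cset Aset
  rw [ProbabilityTheory.cond_apply hCsetmeas, hQC]
  rcases le_or_gt (1 - α - β - γ) 0 with hneg | hpos1
  · rw [ENNReal.ofReal_eq_zero.mpr hneg]
    exact zero_le'
  · set s' : ℝ≥0∞ := ENNReal.ofReal α + ENNReal.ofReal β + ENNReal.ofReal γ with hs'def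
    have hs'top : s' ≠ ⊤ := by
      rw [hs'def]
      exact ENNReal.add_ne_top.mpr ⟨ENNReal.add_ne_top.mpr
        ⟨ENNReal.ofReal_ne_top, ENNReal.ofReal_ne_top⟩, ENNReal.ofReal_ne_top⟩
    have hs'eq : s' = ENNReal.ofReal (α + β + γ) := by
      rw [hs'def, ← ENNReal.ofReal_add hα.1.le hβ.1.le,
        ← ENNReal.ofReal_add (by have := hα.1; have := hβ.1; linarith) hγ.1.le]
    have huadd : ENNReal.ofReal (1 - α - β - γ) + s' = 1 := by
      rw [hs'eq, ← ENNReal.ofReal_add (by linarith) (by have := hα.1; have := hβ.1; have := hγ.1; linarith),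
        show 1 - α - β - γ + (α + β + γ) = 1 by ring, ENNReal.ofReal_one]
    have hu : ENNReal.ofReal (1 - α - β - γ) = 1 - s' := by
      rw [← huadd, ENNReal.add_sub_cancel_right hs'top]
    rw [hu]
    have key : (1 - s') * p ≤ ((P T θ₀ θ₁).prod (μs.prod μr)) (Cset ∩ Aset) := by
      calc (1 - s') * p = 1 * p - s' * p := ENNReal.sub_mul (fun _ _ => hptop)
        _ = p - s' * p := by rw [one_mul]
        _ ≤ _ := hCA
    calc (1 : ℝ≥0∞) - s' = (1 - s') * (p * p⁻¹) := by
          rw [ENNReal.mul_inv_cancel hp0 hptop, mul_one]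
      _ = p⁻¹ * ((1 - s') * p) := by ring
      _ ≤ p⁻¹ * ((P T θ₀ θ₁).prod (μs.prod μr)) (Cset ∩ Aset) := mul_le_mul_right key _


end SeqChange
end

section
/- Stochastic dominance of the likelihood-ratio statistic implies stochastic dominance of the CUSUM run length: let 𝒳 be a measurable space, ℓ : 𝒳 → [0,∞) a measurable function, A > 0, and define the CUSUM stopping time τ_cs := inf{n ∈ ℕ : max_{1≤j≤n} ∏_{i=j}^{n} ℓ(X_i) ≥ A} on the observation sequence (Xₙ). Let P and P* be probability measures on 𝒳 such that P(ℓ(X) > η) ≤ P*(ℓ(X) > η) for every η ∈ ℝ, where X denotes a single observation. Then for every t ∈ ℕ, P_{P,∞}(τ_cs ≥ t) ≥ P_{P*,∞}(τ_cs ≥ t), where P_{Q,∞} denotes the law of an i.i.d.-Q sequence. -/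
open MeasureTheory ProbabilityTheory Filter Set
open scoped ENNReal NNReal

namespace SeqChange

variable {𝒳 : Type*} [MeasurableSpace 𝒳]

/-- The CUSUM stopping time `τ_cs := inf{n ≥ 1 : max_{1≤j≤n} ∏_{i=j}^{n} ℓ(X_i) ≥ A}`,
with values in `ℕ ∪ {∞}` (and `τ_cs = ∞` when the threshold is never reached). -/
noncomputable def cusumTimeR (ℓ : 𝒳 → ℝ) (A : ℝ) (ω : ℕ → 𝒳) : ℕ∞ :=
  sInf {n : ℕ∞ | ∃ m : ℕ, 1 ≤ m ∧ n = (m : ℕ∞) ∧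
    ∃ j : ℕ, 1 ≤ j ∧ j ≤ m ∧ A ≤ ∏ i ∈ Finset.Icc j m, ℓ (ω i)}

section AuxStochDom

/-- Stochastic dominance of `ℓ` transfers to down-sets: the dominated measure assigns
larger probability to any downward-closed set of values of `ℓ`. -/
lemma downset_dominance (ℓ : 𝒳 → ℝ) (hℓ : Measurable ℓ) (hnn : ∀ x, 0 ≤ ℓ x)
    (P Ps : Measure 𝒳) [IsProbabilityMeasure P] [IsProbabilityMeasure Ps]
    (hdom : ∀ η : ℝ, P {x | η < ℓ x} ≤ Ps {x | η < ℓ x})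
    (S : Set ℝ) (hS : MeasurableSet S)
    (hdown : ∀ r s : ℝ, 0 ≤ r → r ≤ s → s ∈ S → r ∈ S) :
    Ps (ℓ ⁻¹' S) ≤ P (ℓ ⁻¹' S) := by
  -- first: upward-closed sets of nonnegative reals
  have key : ∀ T : Set ℝ, (∀ r s : ℝ, r ∈ T → r ≤ s → s ∈ T) → T ⊆ Ici 0 →
      P (ℓ ⁻¹' T) ≤ Ps (ℓ ⁻¹' T) := by
    intro T hup hT0
    rcases T.eq_empty_or_nonempty with rfl | hne
    · simp
    have hbdd : BddBelow T := ⟨0, fun b hb => hT0 hb⟩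
    set a := sInf T with ha
    have hIoi : Ioi a ⊆ T := by
      intro r hr
      obtain ⟨u, huT, hur⟩ := (csInf_lt_iff hbdd hne).mp hr
      exact hup u r huT hur.le
    by_cases haT : a ∈ T
    · have hTeq : T = Ici a := by
        apply Subset.antisymm
        · exact fun u hu => csInf_le hbdd hu
        · intro s hs
          rcases eq_or_lt_of_le (mem_Ici.mp hs) with h | h
          · rwa [← h]
          · exact hIoi h
      have hseq : ℓ ⁻¹' Ici a = ⋂ n : ℕ, {x | a - 1 / (n + 1) < ℓ x} := by
        ext x
        simp only [mem_preimage, mem_Ici, mem_iInter, mem_setOf_eq]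
        constructor
        · intro h n
          have h1 : (0 : ℝ) < 1 / ((n : ℝ) + 1) := by positivity
          linarith
        · intro h
          by_contra hlt
          push_neg at hlt
          obtain ⟨n, hn⟩ := exists_nat_one_div_lt (show (0 : ℝ) < a - ℓ x by linarith)
          have := h n
          linarith
      have hAnti : Antitone fun n : ℕ => {x | a - 1 / ((n : ℝ) + 1) < ℓ x} := by
        intro n m hnm
        intro x hx
        have h1 : (1 : ℝ) / ((m : ℝ) + 1) ≤ 1 / ((n : ℝ) + 1) := by
          apply one_div_le_one_div_of_le
          · positivity
          · exact_mod_cast by omega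
        simp only [mem_setOf_eq] at hx ⊢
        linarith
      have hms : ∀ n : ℕ, MeasurableSet {x | a - 1 / ((n : ℝ) + 1) < ℓ x} := by
        intro n
        exact measurableSet_lt measurable_const hℓ
      rw [hTeq, hseq]
      rw [hAnti.measure_iInter (fun n => (hms n).nullMeasurableSet)
        ⟨0, measure_ne_top _ _⟩,
        hAnti.measure_iInter (μ := Ps) (fun n => (hms n).nullMeasurableSet)
        ⟨0, measure_ne_top _ _⟩]
      exact iInf_mono fun n => hdom _
    · have hTeq : T = Ioi a := by
        apply Subset.antisymm
        · intro u hu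
          exact lt_of_le_of_ne (csInf_le hbdd hu) fun h => haT (by rw [ha, h]; exact hu)
        · exact hIoi
      rw [hTeq]
      exact hdom a
  -- pass to complements
  set T : Set ℝ := Sᶜ ∩ Ici 0 with hT
  have hup : ∀ r s : ℝ, r ∈ T → r ≤ s → s ∈ T := by
    rintro r s ⟨hrS, hr0⟩ hrs
    exact ⟨fun hsS => hrS (hdown r s hr0 hrs hsS), le_trans hr0 hrs⟩
  have hpre : ℓ ⁻¹' T = (ℓ ⁻¹' S)ᶜ := by
    ext x
    simp only [hT, mem_preimage, mem_inter_iff, mem_compl_iff, mem_Ici, mem_preimage]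
    exact ⟨fun h => h.1, fun h => ⟨h, hnn x⟩⟩
  have h1 := key T hup inter_subset_right
  rw [hpre] at h1
  have h2 : Ps (ℓ ⁻¹' S) = 1 - Ps ((ℓ ⁻¹' S)ᶜ) := by
    rw [← prob_compl_eq_one_sub (hℓ hS).compl, compl_compl]
  have h3 : P (ℓ ⁻¹' S) = 1 - P ((ℓ ⁻¹' S)ᶜ) := by
    rw [← prob_compl_eq_one_sub (hℓ hS).compl, compl_compl]
  rw [h2, h3]
  exact tsub_le_tsub_left h1 1

/-- Stochastic dominance integrates against antitone bounded functions of `ℓ`. -/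
lemma lintegral_antitone_dominance (ℓ : 𝒳 → ℝ) (hℓ : Measurable ℓ) (hnn : ∀ x, 0 ≤ ℓ x)
    (P Ps : Measure 𝒳) [IsProbabilityMeasure P] [IsProbabilityMeasure Ps]
    (hdom : ∀ η : ℝ, P {x | η < ℓ x} ≤ Ps {x | η < ℓ x})
    (g : ℝ → ℝ≥0∞) (hg : Measurable g) (hg1 : ∀ r, g r ≤ 1)
    (hanti : ∀ r s : ℝ, 0 ≤ r → r ≤ s → g s ≤ g r) :
    ∫⁻ x, g (ℓ x) ∂Ps ≤ ∫⁻ x, g (ℓ x) ∂P := by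
  have hne : ∀ r, g r ≠ ⊤ := fun r => ((hg1 r).trans_lt ENNReal.one_lt_top).ne
  have hrepr : ∀ (μ : Measure 𝒳) [IsProbabilityMeasure μ],
      ∫⁻ x, g (ℓ x) ∂μ = ∫⁻ u in Ioi (0 : ℝ), μ {x | u < (g (ℓ x)).toReal} := by
    intro μ _
    have h := lintegral_eq_lintegral_meas_lt μ (f := fun x => (g (ℓ x)).toReal)
      (Eventually.of_forall fun x => ENNReal.toReal_nonneg)
      ((hg.comp hℓ).ennreal_toReal.aemeasurable)
    rw [← h]
    exact lintegral_congr fun x => (ENNReal.ofReal_toReal (hne _)).symm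
  rw [hrepr Ps, hrepr P]
  apply lintegral_mono
  intro u
  have hSm : MeasurableSet {r : ℝ | u < (g r).toReal} :=
    measurableSet_lt measurable_const hg.ennreal_toReal
  have hSd : ∀ r s : ℝ, 0 ≤ r → r ≤ s → s ∈ {r : ℝ | u < (g r).toReal} →
      r ∈ {r : ℝ | u < (g r).toReal} := by
    intro r s hr hrs hs
    simp only [mem_setOf_eq] at hs ⊢
    exact hs.trans_le (ENNReal.toReal_mono (hne r) (hanti r s hr hrs))
  exact downset_dominance ℓ hℓ hnn P Ps hdom _ hSm hSd

/-- Stochastic dominance for product measures on downward-closed events of the `ℓ`-values. -/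
lemma pi_downset_dominance (ℓ : 𝒳 → ℝ) (hℓ : Measurable ℓ) (hnn : ∀ x, 0 ≤ ℓ x)
    (P Ps : Measure 𝒳) [IsProbabilityMeasure P] [IsProbabilityMeasure Ps]
    (hdom : ∀ η : ℝ, P {x | η < ℓ x} ≤ Ps {x | η < ℓ x}) :
    ∀ (k : ℕ) (D : Set (Fin k → ℝ)), MeasurableSet D →
      (∀ v ∈ D, ∀ i, 0 ≤ v i) →
      (∀ v w : Fin k → ℝ, (∀ i, 0 ≤ v i) → (∀ i, v i ≤ w i) → w ∈ D → v ∈ D) →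
      Measure.pi (fun _ : Fin k => Ps) ((fun x (i : Fin k) => ℓ (x i)) ⁻¹' D)
        ≤ Measure.pi (fun _ : Fin k => P) ((fun x (i : Fin k) => ℓ (x i)) ⁻¹' D) := by
  intro k
  induction k with
  | zero =>
    intro D _ _ _
    rcases eq_empty_or_nonempty ((fun (x : Fin 0 → 𝒳) (i : Fin 0) => ℓ (x i)) ⁻¹' D) with h | h
    · simp [h]
    · have hu : ((fun (x : Fin 0 → 𝒳) (i : Fin 0) => ℓ (x i)) ⁻¹' D) = univ := by
        obtain ⟨x, hx⟩ := h
        ext y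
        simp only [mem_univ, iff_true]
        have hxy : y = x := Subsingleton.elim _ _
        rw [hxy]; exact hx
      rw [hu]
      simp
  | succ k ih =>
    intro D hD hDnn hdown
    have hfm : Measurable fun (x : Fin (k+1) → 𝒳) (i : Fin (k+1)) => ℓ (x i) :=
      measurable_pi_lambda _ fun i => hℓ.comp (measurable_pi_apply i)
    have hfmk : Measurable fun (y : Fin k → 𝒳) (j : Fin k) => ℓ (y j) :=
      measurable_pi_lambda _ fun i => hℓ.comp (measurable_pi_apply i)
    set E : Set (Fin (k+1) → 𝒳) := (fun x (i : Fin (k+1)) => ℓ (x i)) ⁻¹' D with hEdef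
    have hEm : MeasurableSet E := hfm hD
    have hcons : ∀ (x : 𝒳) (y : Fin k → 𝒳),
        (fun i : Fin (k+1) => ℓ ((Fin.cons x y : Fin (k+1) → 𝒳) i)) = (Fin.cons (ℓ x) (fun j => ℓ (y j)) : Fin (k+1) → ℝ) := by
      intro x y
      funext i
      refine Fin.cases ?_ ?_ i
      · simp
      · intro j; simp
    -- decomposition of the product measure
    have decomp : ∀ (μ : Measure 𝒳) [IsProbabilityMeasure μ],
        Measure.pi (fun _ : Fin (k+1) => μ) E
          = ∫⁻ x, Measure.pi (fun _ : Fin k => μ) {y | Fin.cons x y ∈ E} ∂μ := by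
      intro μ _
      set e := MeasurableEquiv.piFinSuccAbove (fun _ : Fin (k+1) => 𝒳) 0 with he
      have hmp := (measurePreserving_piFinSuccAbove (fun _ : Fin (k+1) => μ) 0).symm
      have h1 : Measure.pi (fun _ : Fin (k+1) => μ) E
          = (μ.prod (Measure.pi fun _ : Fin k => μ)) (e.symm ⁻¹' E) :=
        (hmp.measure_preimage hEm.nullMeasurableSet).symm
      rw [h1, Measure.prod_apply (e.symm.measurable hEm)]
      apply lintegral_congr
      intro x
      congr 1
      ext y
      simp only [mem_preimage, mem_setOf_eq, he,
        MeasurableEquiv.piFinSuccAbove_symm_apply, Fin.insertNthEquiv_zero]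
      exact Iff.rfl
    -- slices
    set slice : ℝ → Set (Fin k → ℝ) := fun r => {w | Fin.cons r w ∈ D} with hslicedef
    have hconsMeas : ∀ r : ℝ, Measurable fun w : Fin k → ℝ => (Fin.cons r w : Fin (k+1) → ℝ) := by
      intro r
      rw [measurable_pi_iff]
      intro i
      refine Fin.cases ?_ ?_ i
      · simp only [Fin.cons_zero]; exact measurable_const
      · intro j; simp only [Fin.cons_succ]; exact measurable_pi_apply j
    have hsm : ∀ r, MeasurableSet (slice r) := fun r => (hconsMeas r) hD
    have hsub : ∀ r, ∀ w ∈ slice r, ∀ j, 0 ≤ w j := by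
      intro r w hw j
      have := hDnn _ hw j.succ
      simpa using this
    have hsdown : ∀ r, ∀ v w : Fin k → ℝ, (∀ i, 0 ≤ v i) → (∀ i, v i ≤ w i) →
        w ∈ slice r → v ∈ slice r := by
      intro r v w hv hvw hw
      have hr0 : 0 ≤ r := by simpa using hDnn _ hw 0
      refine hdown (Fin.cons r v) (Fin.cons r w) ?_ ?_ hw
      · intro i
        refine Fin.cases ?_ ?_ i
        · simpa using hr0
        · intro j; simpa using hv j
      · intro i
        refine Fin.cases ?_ ?_ i
        · simp
        · intro j; simpa using hvw j
    have hsanti : ∀ r s : ℝ, 0 ≤ r → r ≤ s → slice s ⊆ slice r := by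
      intro r s hr hrs w hw
      refine hdown (Fin.cons r w) (Fin.cons s w) ?_ ?_ hw
      · intro i
        refine Fin.cases ?_ ?_ i
        · simpa using hr
        · intro j; simpa using hsub s w hw j
      · intro i
        refine Fin.cases ?_ ?_ i
        · simpa using hrs
        · intro j; simp
    -- the slice function g
    set g : ℝ → ℝ≥0∞ :=
      fun r => Measure.pi (fun _ : Fin k => P) ((fun y (j : Fin k) => ℓ (y j)) ⁻¹' slice r)
      with hgdef
    have hgm : Measurable g := by
      have hF : Measurable fun p : ℝ × (Fin k → 𝒳) =>
          (Fin.cons p.1 (fun j => ℓ (p.2 j)) : Fin (k+1) → ℝ) := by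
        rw [measurable_pi_iff]
        intro i
        refine Fin.cases ?_ ?_ i
        · simp only [Fin.cons_zero]; exact measurable_fst
        · intro j
          simp only [Fin.cons_succ]
          exact hℓ.comp ((measurable_pi_apply j).comp measurable_snd)
      have hs2 : MeasurableSet {p : ℝ × (Fin k → 𝒳) | (Fin.cons p.1 (fun j => ℓ (p.2 j)) : Fin (k+1) → ℝ) ∈ D} :=
        hF hD
      exact measurable_measure_prodMk_left (ν := Measure.pi fun _ : Fin k => P) hs2
    have hg1 : ∀ r, g r ≤ 1 := fun r => prob_le_one
    have hganti : ∀ r s : ℝ, 0 ≤ r → r ≤ s → g s ≤ g r := by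
      intro r s hr hrs
      exact measure_mono (preimage_mono (hsanti r s hr hrs))
    -- the slices of E rewritten
    have hsliceE : ∀ x : 𝒳, {y : Fin k → 𝒳 | Fin.cons x y ∈ E}
        = (fun y (j : Fin k) => ℓ (y j)) ⁻¹' slice (ℓ x) := by
      intro x
      ext y
      simp only [hEdef, mem_setOf_eq, mem_preimage, hslicedef, hcons x y]
    calc Measure.pi (fun _ : Fin (k+1) => Ps) E
        = ∫⁻ x, Measure.pi (fun _ : Fin k => Ps) {y | Fin.cons x y ∈ E} ∂Ps := decomp Ps
      _ ≤ ∫⁻ x, g (ℓ x) ∂Ps := by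
          apply lintegral_mono
          intro x
          dsimp only
          rw [hsliceE x]
          exact ih (slice (ℓ x)) (hsm _) (hsub _) (hsdown _)
      _ ≤ ∫⁻ x, g (ℓ x) ∂P :=
          lintegral_antitone_dominance ℓ hℓ hnn P Ps hdom g hgm hg1 hganti
      _ = Measure.pi (fun _ : Fin (k+1) => P) E := by
          rw [decomp P]
          apply lintegral_congr
          intro x
          rw [hsliceE x]

/-- The finite-dimensional marginal of a no-change law is the product measure. -/
lemma noChangeLaw_map (F : Measure 𝒳) [IsProbabilityMeasure F]
    (Q : Measure (ℕ → 𝒳)) (hQ : IsNoChangeLaw Q F) (k : ℕ) :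
    Q.map (fun ω (i : Fin k) => ω ((i : ℕ) + 1)) = Measure.pi (fun _ : Fin k => F) := by
  classical
  have hπ : Measurable fun (ω : ℕ → 𝒳) (i : Fin k) => ω ((i : ℕ) + 1) :=
    measurable_pi_lambda _ fun i => measurable_pi_apply _
  symm
  apply Measure.pi_eq
  intro B hB
  rw [Measure.map_apply hπ (MeasurableSet.univ_pi hB)]
  set A : ℕ → Set 𝒳 := fun n => if h : n - 1 < k then B ⟨n - 1, h⟩ else univ with hA
  have hAm : ∀ n, MeasurableSet (A n) := by
    intro n
    simp only [hA]
    split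
    · exact hB _
    · exact MeasurableSet.univ
  have hAeval : ∀ j : Fin k, A ((j : ℕ) + 1) = B j := by
    intro j
    have h1 : (j : ℕ) + 1 - 1 = (j : ℕ) := by omega
    have h2 : (j : ℕ) + 1 - 1 < k := by omega
    have h3 : (⟨(j : ℕ) + 1 - 1, h2⟩ : Fin k) = j := Fin.ext h1
    simp only [hA, dif_pos h2]
    rw [h3]
  set s : Finset ℕ := Finset.image (fun i : Fin k => (i : ℕ) + 1) Finset.univ with hs
  have hseteq : (fun (ω : ℕ → 𝒳) (i : Fin k) => ω ((i : ℕ) + 1)) ⁻¹' (univ.pi B)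
      = {ω : ℕ → 𝒳 | ∀ i ∈ s, ω i ∈ A i} := by
    ext ω
    simp only [mem_preimage, Set.mem_pi, mem_univ, true_implies, mem_setOf_eq]
    constructor
    · intro h i hi
      simp only [hs, Finset.mem_image, Finset.mem_univ, true_and] at hi
      obtain ⟨j, rfl⟩ := hi
      rw [hAeval j]
      exact h j
    · intro h j
      have := h ((j : ℕ) + 1) (by simp [hs])
      rwa [hAeval j] at this
  have hs1 : ∀ i ∈ s, 1 ≤ i := by
    intro i hi
    simp only [hs, Finset.mem_image] at hi
    obtain ⟨j, _, rfl⟩ := hi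
    omega
  rw [hseteq, hQ.2 s hs1 A hAm]
  rw [hs, Finset.prod_image (by intro a _ b _ h; exact Fin.ext (by simp only at h; omega))]
  exact Finset.prod_congr rfl fun j _ => by rw [hAeval j]

end AuxStochDom

/-- Stochastic dominance of the likelihood-ratio statistic implies
stochastic dominance of the CUSUM run length: if `P(ℓ(X) > η) ≤ P*(ℓ(X) > η)` for every
`η`, then for every `t`, `P_{P,∞}(τ_cs ≥ t) ≥ P_{P*,∞}(τ_cs ≥ t)`. -/
theorem cusum_run_length_stochastic_dominance
    {𝒳 : Type*} [MeasurableSpace 𝒳]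
    (ℓ : 𝒳 → ℝ) (hℓmeas : Measurable ℓ) (hℓnonneg : ∀ x, 0 ≤ ℓ x)
    (A : ℝ) (hA : 0 < A)
    (P Ps : Measure 𝒳) [IsProbabilityMeasure P] [IsProbabilityMeasure Ps]
    (hdom : ∀ η : ℝ, P {x | η < ℓ x} ≤ Ps {x | η < ℓ x})
    (t : ℕ)
    (Q Qs : Measure (ℕ → 𝒳)) (hQ : IsNoChangeLaw Q P) (hQs : IsNoChangeLaw Qs Ps) :
    Qs {ω | (t : ℕ∞) ≤ cusumTimeR ℓ A ω} ≤ Q {ω | (t : ℕ∞) ≤ cusumTimeR ℓ A ω} := by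
  classical
  set k := t - 1 with hk
  set π : (ℕ → 𝒳) → (Fin k → 𝒳) := fun ω i => ω ((i : ℕ) + 1) with hπdef
  have hπ : Measurable π := measurable_pi_lambda _ fun i => measurable_pi_apply _
  set vext : (Fin k → ℝ) → ℕ → ℝ :=
    fun v i => if h : i - 1 < k then v ⟨i - 1, h⟩ else 0 with hvext
  set D : Set (Fin k → ℝ) :=
    {v | ∀ j m : ℕ, 1 ≤ j → j ≤ m → m ≤ k → ∏ i ∈ Finset.Icc j m, vext v i < A} with hD
  have hvm : ∀ i : ℕ, Measurable fun v : Fin k → ℝ => vext v i := by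
    intro i
    simp only [hvext]
    split
    · exact measurable_pi_apply _
    · exact measurable_const
  have hDm : MeasurableSet D := by
    have hset : D = ⋂ (j : ℕ) (m : ℕ),
        {v : Fin k → ℝ | 1 ≤ j → j ≤ m → m ≤ k → ∏ i ∈ Finset.Icc j m, vext v i < A} := by
      ext v
      simp only [hD, mem_setOf_eq, mem_iInter]
    rw [hset]
    refine MeasurableSet.iInter fun j => MeasurableSet.iInter fun m => ?_
    by_cases h1 : 1 ≤ j ∧ j ≤ m ∧ m ≤ k
    · obtain ⟨ha, hb, hc⟩ := h1
      have heq : {v : Fin k → ℝ | 1 ≤ j → j ≤ m → m ≤ k → ∏ i ∈ Finset.Icc j m, vext v i < A}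
          = (fun v : Fin k → ℝ => ∏ i ∈ Finset.Icc j m, vext v i) ⁻¹' Iio A := by
        ext v
        simp [ha, hb, hc]
      rw [heq]
      exact (Finset.measurable_prod _ fun i _ => hvm i) measurableSet_Iio
    · have heq : {v : Fin k → ℝ | 1 ≤ j → j ≤ m → m ≤ k → ∏ i ∈ Finset.Icc j m, vext v i < A}
          = univ := by
        ext v
        simp only [mem_setOf_eq, mem_univ, iff_true]
        intro ha hb hc
        exact absurd ⟨ha, hb, hc⟩ h1
      rw [heq]
      exact MeasurableSet.univ
  -- product formula for vext on relevant windows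
  have hprod : ∀ (ω : ℕ → 𝒳) (j m : ℕ), 1 ≤ j → m ≤ k →
      ∏ i ∈ Finset.Icc j m, vext (fun i : Fin k => ℓ (π ω i)) i
        = ∏ i ∈ Finset.Icc j m, ℓ (ω i) := by
    intro ω j m hj hm
    refine Finset.prod_congr rfl fun i hi => ?_
    rw [Finset.mem_Icc] at hi
    have h1 : i - 1 < k := by omega
    simp only [hvext, dif_pos h1, hπdef]
    have h2 : (i - 1) + 1 = i := by omega
    show ℓ (ω ((i - 1) + 1)) = ℓ (ω i)
    rw [h2]
  -- the event equality
  have hevent : {ω : ℕ → 𝒳 | (t : ℕ∞) ≤ cusumTimeR ℓ A ω}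
      = π ⁻¹' ((fun (x : Fin k → 𝒳) (i : Fin k) => ℓ (x i)) ⁻¹' D) := by
    ext ω
    simp only [mem_setOf_eq, mem_preimage, cusumTimeR, le_sInf_iff, mem_setOf_eq, hD]
    constructor
    · intro h j m hj hjm hmk
      by_contra hge
      push_neg at hge
      have hmem := h (m : ℕ∞) ⟨m, le_trans hj hjm, rfl, j, hj, hjm, by
        rwa [hprod ω j m hj hmk] at hge⟩
      rw [Nat.cast_le] at hmem
      omega
    · rintro h n ⟨m, hm, rfl, j, hj, hjm, hAle⟩
      rw [Nat.cast_le]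
      by_contra hlt
      push_neg at hlt
      have hmk : m ≤ k := by omega
      have := h j m hj hjm hmk
      rw [hprod ω j m hj hmk] at this
      exact absurd hAle (not_le.mpr this)
  -- restrict to the nonnegative orthant
  set Dorth : Set (Fin k → ℝ) := D ∩ {v | ∀ i, 0 ≤ v i} with hDo
  have hOm : MeasurableSet {v : Fin k → ℝ | ∀ i, 0 ≤ v i} := by
    have : {v : Fin k → ℝ | ∀ i, 0 ≤ v i} = ⋂ i, (fun v : Fin k → ℝ => v i) ⁻¹' Ici 0 := by
      ext v; simp [mem_iInter]
    rw [this]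
    exact MeasurableSet.iInter fun i => (measurable_pi_apply i) measurableSet_Ici
  have hDom : MeasurableSet Dorth := hDm.inter hOm
  have hpreeq : (fun (x : Fin k → 𝒳) (i : Fin k) => ℓ (x i)) ⁻¹' D
      = (fun (x : Fin k → 𝒳) (i : Fin k) => ℓ (x i)) ⁻¹' Dorth := by
    ext x
    simp only [mem_preimage, hDo, mem_inter_iff, mem_setOf_eq]
    exact ⟨fun h => ⟨h, fun i => hℓnonneg _⟩, fun h => h.1⟩
  have hDonn : ∀ v ∈ Dorth, ∀ i, 0 ≤ v i := fun v hv => hv.2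
  have hDodown : ∀ v w : Fin k → ℝ, (∀ i, 0 ≤ v i) → (∀ i, v i ≤ w i) →
      w ∈ Dorth → v ∈ Dorth := by
    rintro v w hv hvw ⟨hwD, _⟩
    refine ⟨?_, hv⟩
    intro j m hj hjm hmk
    have hle : ∏ i ∈ Finset.Icc j m, vext v i ≤ ∏ i ∈ Finset.Icc j m, vext w i := by
      apply Finset.prod_le_prod
      · intro i _
        simp only [hvext]
        split
        · exact hv _
        · exact le_rfl
      · intro i hi
        rw [Finset.mem_Icc] at hi
        have h1 : i - 1 < k := by omega
        simp only [hvext, dif_pos h1]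
        exact hvw _
    exact lt_of_le_of_lt hle (hwD j m hj hjm hmk)
  -- put everything together
  have hQmap := noChangeLaw_map P Q hQ k
  have hQsmap := noChangeLaw_map Ps Qs hQs k
  have hfmk : Measurable fun (x : Fin k → 𝒳) (i : Fin k) => ℓ (x i) :=
    measurable_pi_lambda _ fun i => hℓmeas.comp (measurable_pi_apply i)
  have hEm : MeasurableSet ((fun (x : Fin k → 𝒳) (i : Fin k) => ℓ (x i)) ⁻¹' Dorth) := hfmk hDom
  calc Qs {ω | (t : ℕ∞) ≤ cusumTimeR ℓ A ω}
      = Qs (π ⁻¹' ((fun (x : Fin k → 𝒳) (i : Fin k) => ℓ (x i)) ⁻¹' Dorth)) := by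
        rw [hevent, hpreeq]
    _ = (Qs.map π) ((fun (x : Fin k → 𝒳) (i : Fin k) => ℓ (x i)) ⁻¹' Dorth) :=
        (Measure.map_apply hπ hEm).symm
    _ = Measure.pi (fun _ : Fin k => Ps) ((fun (x : Fin k → 𝒳) (i : Fin k) => ℓ (x i)) ⁻¹' Dorth) := by
        rw [hQsmap]
    _ ≤ Measure.pi (fun _ : Fin k => P) ((fun (x : Fin k → 𝒳) (i : Fin k) => ℓ (x i)) ⁻¹' Dorth) :=
        pi_downset_dominance ℓ hℓmeas hℓnonneg P Ps hdom k Dorth hDom hDonn hDodown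
    _ = (Q.map π) ((fun (x : Fin k → 𝒳) (i : Fin k) => ℓ (x i)) ⁻¹' Dorth) := by rw [hQmap]
    _ = Q {ω | (t : ℕ∞) ≤ cusumTimeR ℓ A ω} := by
        rw [Measure.map_apply hπ hEm, hevent, hpreeq]


end SeqChange
end
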